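/- arXiv:2109.06364 — 2 statements merged into one kernel-verified Lean document; each statement's English description precedes it below -/
import Mathlib

section
/- If X is a class I simple graph with no isolated vertices, then its complete truncation is class I. If X is a class II simple graph with no isolated vertices whose maximum degree is even, then its complete truncation is class I. -/
open SimpleGraph

/-- A proper edge coloring of a simple graph: distinct edges sharing a vertex
receive distinct colors. -/
def IsProperEdgeColoring {V α : Type*} (G : SimpleGraph V) (C : Sym2 V → α) : Prop :=
  ∀ e₁ ∈ G.edgeSet, ∀ e₂ ∈ G.edgeSet, e₁ ≠ e₂ → (∃ v, v ∈ e₁ ∧ v ∈ e₂) → C e₁ ≠ C e₂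

/-- The chromatic index: least number of colors admitting a proper edge coloring. -/
noncomputable def chromIndex {V : Type*} (G : SimpleGraph V) : ℕ :=
  sInf {k | ∃ C : Sym2 V → Fin k, IsProperEdgeColoring G C}

/-- Degree of a vertex. -/
noncomputable def deg {V : Type*} (G : SimpleGraph V) (v : V) : ℕ :=
  (G.neighborSet v).ncard

/-- Maximum degree. -/
noncomputable def maxDeg {V : Type*} (G : SimpleGraph V) : ℕ :=
  sSup (Set.range (deg G))

/-- A graph is class I if its chromatic index equals its maximum degree. -/
def ClassI {V : Type*} (G : SimpleGraph V) : Prop := chromIndex G = maxDeg G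

/-- The sun over `G`: attach one pendant edge at each vertex of `G`. -/
def sun {V : Type*} (G : SimpleGraph V) : SimpleGraph (V ⊕ V) :=
  SimpleGraph.fromRel (fun x y =>
    (∃ u v, G.Adj u v ∧ x = Sum.inl u ∧ y = Sum.inl v) ∨
    (∃ v, x = Sum.inl v ∧ y = Sum.inr v))

/-- The pendant edge of the sun attached at vertex `v`. -/
def pendant {V : Type*} (v : V) : Sym2 (V ⊕ V) := s(Sum.inl v, Sum.inr v)

/-- The generalized truncation of `X` determined by the graph `H` on the darts of `X`:
each dart is joined to its reverse dart (the matching `M_F`) and the edges of `H`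
(the constituent edges) are added. -/
def trunc {V : Type*} (X : SimpleGraph V) (H : SimpleGraph X.Dart) : SimpleGraph X.Dart :=
  SimpleGraph.fromRel (fun d d' => d' = d.symm ∨ H.Adj d d')

/-- The constituent graph `H` respects clusters: its edges join only darts with the
same initial vertex. -/
def RespectsClusters {V : Type*} (X : SimpleGraph V) (H : SimpleGraph X.Dart) : Prop :=
  ∀ d d' : X.Dart, H.Adj d d' → d.toProd.1 = d'.toProd.1

/-- The cluster at `v`: darts with initial vertex `v`. -/
def cluster {V : Type*} (X : SimpleGraph V) (v : V) : Set X.Dart :=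
  {d : X.Dart | d.toProd.1 = v}

/-- The constituent at `v`, as a graph in its own right. -/
def constituent {V : Type*} (X : SimpleGraph V) (H : SimpleGraph X.Dart) (v : V) :
    SimpleGraph (cluster X v) := H.induce (cluster X v)

/-- The complete truncation: every constituent is the complete graph on its cluster. -/
def completeTrunc {V : Type*} (X : SimpleGraph V) : SimpleGraph X.Dart :=
  trunc X (SimpleGraph.fromRel (fun d d' => d.toProd.1 = d'.toProd.1))

/-- `X` has no isolated vertices. -/
def NoIsolated {V : Type*} (X : SimpleGraph V) : Prop := ∀ v : V, ∃ w, X.Adj v w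

/-- The number of edges of `X` of color `k` incident with `v`. -/
noncomputable def colorCountAt {V α : Type*} (X : SimpleGraph V) (c : Sym2 V → α)
    (v : V) (k : α) : ℕ :=
  {e | e ∈ X.edgeSet ∧ v ∈ e ∧ c e = k}.ncard

/-- An edge coloring (not necessarily proper) is parity-balanced if for every vertex `v`
and every color `k`, the number of edges of color `k` incident with `v` has the same
parity as the degree of `v`. -/
def ParityBalanced {V : Type*} {m : ℕ} (X : SimpleGraph V) (c : Sym2 V → Fin m) : Prop :=
  ∀ (v : V) (k : Fin m), colorCountAt X c v k % 2 = deg X v % 2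

/-- The edges of the sun centered at the constituent at `v`: the constituent edges
at `v` together with the matching edges incident with the cluster at `v`. -/
def sunEdges {V : Type*} (X : SimpleGraph V) (H : SimpleGraph X.Dart) (v : V) :
    Set (Sym2 X.Dart) :=
  {e | e ∈ (trunc X H).edgeSet ∧ ∃ d : X.Dart, d ∈ e ∧ d.toProd.1 = v}

/-- `H` describes a cyclic truncation of `X`: it respects clusters and every
constituent is a cycle on its cluster. -/
def CyclicConstituents {V : Type*} (X : SimpleGraph V) (H : SimpleGraph X.Dart) : Prop :=
  RespectsClusters X H ∧ (∀ d : X.Dart, deg H d = 2) ∧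
    ∀ v : V, (constituent X H v).Connected

section Aux

variable {V : Type*}

lemma aux_exists_adj_of_mem_edge {G : SimpleGraph V} {e : Sym2 V} (he : e ∈ G.edgeSet) {u : V}
    (hu : u ∈ e) : ∃ a, G.Adj u a ∧ e = s(u, a) := by
  induction e using Sym2.ind with
  | _ x y =>
    rw [Sym2.mem_iff] at hu
    rw [SimpleGraph.mem_edgeSet] at he
    rcases hu with rfl | rfl
    · exact ⟨y, he, rfl⟩
    · exact ⟨x, he.symm, Sym2.eq_swap.symm⟩

lemma aux_proper_of_local {W α : Type*} {T : SimpleGraph W} (C : Sym2 W → α)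
    (h : ∀ u a b, T.Adj u a → T.Adj u b → a ≠ b → C s(u, a) ≠ C s(u, b)) :
    IsProperEdgeColoring T C := by
  intro e₁ he₁ e₂ he₂ hne hex
  obtain ⟨u, hu₁, hu₂⟩ := hex
  obtain ⟨a, ha, rfl⟩ := aux_exists_adj_of_mem_edge he₁ hu₁
  obtain ⟨b, hb, rfl⟩ := aux_exists_adj_of_mem_edge he₂ hu₂
  exact h u a b ha hb (fun hh => hne (by rw [hh]))

lemma aux_maxDeg_le_of_proper {W : Type*} [Finite W] (G : SimpleGraph W) {k : ℕ}
    (C : Sym2 W → Fin k) (hC : IsProperEdgeColoring G C) : maxDeg G ≤ k := by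
  apply csSup_le'
  rintro _ ⟨v, rfl⟩
  have hinj : Set.InjOn (fun w => C s(v, w)) (G.neighborSet v) := by
    intro a ha b hb hab
    by_contra hne
    have hav : s(v, a) ≠ s(v, b) := by
      intro h
      rw [Sym2.eq_iff] at h
      rcases h with ⟨-, h⟩ | ⟨h, -⟩
      · exact hne h
      · exact G.irrefl (h ▸ hb)
    exact hC s(v, a) ha s(v, b) hb hav ⟨v, Sym2.mem_mk_left _ _, Sym2.mem_mk_left _ _⟩ hab
  calc deg G v = ((fun w => C s(v, w)) '' G.neighborSet v).ncard :=
        (Set.ncard_image_of_injOn hinj).symm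
    _ ≤ (Set.univ : Set (Fin k)).ncard :=
        Set.ncard_le_ncard (Set.subset_univ _) Set.finite_univ
    _ = k := by simp [Set.ncard_univ]

lemma aux_dart_finite [Finite V] (X : SimpleGraph V) : Finite X.Dart :=
  Finite.of_injective _ (SimpleGraph.Dart.toProd_injective)

lemma aux_deg_le_maxDeg [Finite V] (X : SimpleGraph V) (v : V) : deg X v ≤ maxDeg X :=
  le_csSup ((Set.finite_range _).bddAbove) ⟨v, rfl⟩

lemma aux_cluster_ncard [Finite V] (X : SimpleGraph V) (v : V) :
    {d : X.Dart | d.toProd.1 = v}.ncard = deg X v := by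
  have himg : (fun d : X.Dart => d.toProd.2) '' {d | d.toProd.1 = v} = X.neighborSet v := by
    ext w
    constructor
    · rintro ⟨d, hd, rfl⟩
      exact hd ▸ d.adj
    · intro hw
      exact ⟨⟨(v, w), hw⟩, rfl, rfl⟩
  haveI := aux_dart_finite X
  rw [deg, ← himg, Set.ncard_image_of_injOn]
  intro a ha b hb h
  exact SimpleGraph.Dart.ext a b (Prod.ext (ha.trans hb.symm) h)

lemma aux_completeTrunc_adj {X : SimpleGraph V} {d d' : X.Dart} :
    (completeTrunc X).Adj d d' ↔ d ≠ d' ∧ (d' = d.symm ∨ d.toProd.1 = d'.toProd.1) := by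
  have hsymm : d = d'.symm ↔ d' = d.symm := by
    constructor
    · rintro rfl; exact (SimpleGraph.Dart.symm_symm d').symm
    · rintro rfl; exact (SimpleGraph.Dart.symm_symm d).symm
  simp only [completeTrunc, trunc, SimpleGraph.fromRel_adj, ne_eq]
  constructor
  · rintro ⟨hne, h⟩
    refine ⟨hne, ?_⟩
    rcases h with (h | h) | (h | h)
    · exact Or.inl h
    · exact Or.inr (h.2.elim id Eq.symm)
    · exact Or.inl (hsymm.mp h)
    · exact Or.inr (h.2.elim Eq.symm id)
  · rintro ⟨hne, h⟩
    exact ⟨hne, Or.inl (h.imp id (fun h2 => ⟨hne, Or.inl h2⟩))⟩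

lemma aux_edge_ne_of_cluster {X : SimpleGraph V} {u a : X.Dart}
    (hfst : u.toProd.1 = a.toProd.1) (hne : u ≠ a) : u.edge ≠ a.edge := by
  intro h
  rw [SimpleGraph.dart_edge_eq_iff] at h
  rcases h with h | h
  · exact hne h
  · have h2 : u.toProd.1 = a.toProd.2 := by rw [h]; rfl
    exact a.snd_ne_fst (h2.symm.trans hfst)

lemma aux_neighborSet_completeTrunc {X : SimpleGraph V} (d : X.Dart) :
    (completeTrunc X).neighborSet d =
      insert d.symm ({d' : X.Dart | d'.toProd.1 = d.toProd.1} \ {d}) := by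
  ext d'
  simp only [SimpleGraph.mem_neighborSet, aux_completeTrunc_adj, Set.mem_insert_iff,
    Set.mem_diff, Set.mem_singleton_iff, Set.mem_setOf_eq]
  constructor
  · rintro ⟨hne, h | h⟩
    · exact Or.inl h
    · exact Or.inr ⟨h.symm, fun hh => hne hh.symm⟩
  · rintro (rfl | ⟨h, hne⟩)
    · exact ⟨(SimpleGraph.Dart.symm_ne d).symm, Or.inl rfl⟩
    · exact ⟨fun hh => hne hh.symm, Or.inr h.symm⟩

lemma aux_deg_completeTrunc [Finite V] (X : SimpleGraph V) (d : X.Dart) :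
    deg (completeTrunc X) d = deg X d.toProd.1 := by
  haveI := aux_dart_finite X
  have hmem : d ∈ {d' : X.Dart | d'.toProd.1 = d.toProd.1} := rfl
  have hnm : d.symm ∉ ({d' : X.Dart | d'.toProd.1 = d.toProd.1} \ {d}) := by
    rintro ⟨h, -⟩
    exact d.snd_ne_fst h
  have h1 : 1 ≤ {d' : X.Dart | d'.toProd.1 = d.toProd.1}.ncard :=
    (Set.ncard_pos (Set.toFinite _)).mpr ⟨d, hmem⟩
  rw [deg, aux_neighborSet_completeTrunc, Set.ncard_insert_of_notMem hnm (Set.toFinite _),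
    Set.ncard_diff_singleton_of_mem hmem, aux_cluster_ncard X] at *
  omega

end Aux

section Aux2

lemma aux_two_mul_inj {m : ℕ} (hm : Odd m) {x y : ZMod m} (h : 2 * x = 2 * y) : x = y := by
  haveI : NeZero m := ⟨hm.pos.ne'⟩
  have hu : IsUnit (2 : ZMod m) := by
    have := (ZMod.isUnit_iff_coprime 2 m).mpr (Nat.coprime_two_left.mpr hm)
    simpa using this
  exact hu.mul_left_cancel h

lemma aux_cast_inj_of_lt {m a b : ℕ} [NeZero m] (ha : a < m) (hb : b < m)
    (h : (a : ZMod m) = b) : a = b := by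
  have := congrArg ZMod.val h
  rwa [ZMod.val_cast_of_lt ha, ZMod.val_cast_of_lt hb] at this

lemma aux_exists_injOn_fin {α : Type*} [Finite α] (s : Set α) {k : ℕ} (hk : 0 < k)
    (h : s.ncard ≤ k) : ∃ f : α → Fin k, Set.InjOn f s := by
  classical
  haveI := Fintype.ofFinite α
  haveI := s.toFinite.fintype
  have hcard : Fintype.card s ≤ k := by
    rw [← Nat.card_eq_fintype_card, Nat.card_coe_set_eq]; exact h
  let g := Fintype.equivFin s
  refine ⟨fun a => if ha : a ∈ s then Fin.castLE hcard (g ⟨a, ha⟩) else ⟨0, hk⟩, ?_⟩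
  intro a ha b hb hab
  simp only [dif_pos ha, dif_pos hb] at hab
  have : g ⟨a, ha⟩ = g ⟨b, hb⟩ := Fin.castLE_injective hcard hab
  simpa using g.injective this

end Aux2

section Aux3

variable {V : Type*}

lemma aux_maxDeg_completeTrunc [Finite V] (X : SimpleGraph V) (hX : NoIsolated X) :
    maxDeg (completeTrunc X) = maxDeg X := by
  haveI := aux_dart_finite X
  rcases isEmpty_or_nonempty V with hV | hV
  · haveI : IsEmpty X.Dart := ⟨fun d => IsEmpty.false d.toProd.1⟩
    rw [maxDeg, maxDeg, Set.range_eq_empty, Set.range_eq_empty]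
  · apply le_antisymm
    · apply csSup_le'
      rintro _ ⟨d, rfl⟩
      rw [aux_deg_completeTrunc]
      exact aux_deg_le_maxDeg X _
    · have hne : (Set.range (deg X)).Nonempty := Set.range_nonempty _
      obtain ⟨v, hv⟩ := Nat.sSup_mem hne ((Set.finite_range _).bddAbove)
      obtain ⟨w, hw⟩ := hX v
      have hd : deg (completeTrunc X) ⟨(v, w), hw⟩ = maxDeg X := by
        rw [aux_deg_completeTrunc]; exact hv
      exact hd ▸ le_csSup ((Set.finite_range _).bddAbove) ⟨_, rfl⟩

lemma aux_classI_empty [Finite V] [IsEmpty V] (X : SimpleGraph V) :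
    ClassI (completeTrunc X) := by
  haveI : IsEmpty X.Dart := ⟨fun d => IsEmpty.false d.toProd.1⟩
  haveI : IsEmpty (Sym2 X.Dart) := by
    constructor
    intro e
    induction e using Sym2.ind with
    | _ x y => exact IsEmpty.false x
  have h0 : chromIndex (completeTrunc X) = 0 := by
    apply Nat.eq_zero_of_le_zero
    apply Nat.sInf_le
    exact ⟨fun e => isEmptyElim e, fun e₁ he₁ => isEmptyElim e₁⟩
  rw [ClassI, h0, maxDeg, Set.range_eq_empty]
  simp

lemma aux_classI_of_exists [Finite V] (X : SimpleGraph V) (hX : NoIsolated X)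
    (h : ∃ C : Sym2 X.Dart → Fin (maxDeg X), IsProperEdgeColoring (completeTrunc X) C) :
    ClassI (completeTrunc X) := by
  haveI := aux_dart_finite X
  have h1 : chromIndex (completeTrunc X) ≤ maxDeg X := Nat.sInf_le h
  have h2 : maxDeg (completeTrunc X) ≤ chromIndex (completeTrunc X) := by
    have hmem : chromIndex (completeTrunc X) ∈
        {k | ∃ C : Sym2 X.Dart → Fin k, IsProperEdgeColoring (completeTrunc X) C} :=
      Nat.sInf_mem ⟨maxDeg X, h⟩
    obtain ⟨C, hC⟩ := hmem
    exact aux_maxDeg_le_of_proper _ C hC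
  rw [ClassI]
  rw [aux_maxDeg_completeTrunc X hX] at h2 ⊢
  omega

lemma aux_maxDeg_pos [Finite V] [Nonempty V] (X : SimpleGraph V) (hX : NoIsolated X) :
    1 ≤ maxDeg X := by
  obtain ⟨v⟩ := ‹Nonempty V›
  obtain ⟨w, hw⟩ := hX v
  have h1 : 1 ≤ deg X v := (Set.ncard_pos (Set.toFinite _)).mpr ⟨w, hw⟩
  exact le_trans h1 (aux_deg_le_maxDeg X v)

end Aux3

section Aux4

variable {V : Type*}

lemma aux_coloring_of_classI [Finite V] [Nonempty V] (X : SimpleGraph V) (hX : NoIsolated X)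
    (c : Sym2 V → Fin (maxDeg X)) (hc : IsProperEdgeColoring X c) :
    ∃ C : Sym2 X.Dart → Fin (maxDeg X), IsProperEdgeColoring (completeTrunc X) C := by
  haveI := aux_dart_finite X
  have hΔ1 : 1 ≤ maxDeg X := aux_maxDeg_pos X hX
  haveI : NeZero (maxDeg X) := ⟨by omega⟩
  classical
  set f : X.Dart → ZMod (maxDeg X) := fun d => ((c d.edge).val : ZMod (maxDeg X)) with hf
  -- f is injective on darts sharing the same initial vertex
  have hfinj : ∀ {x y : X.Dart}, x.toProd.1 = y.toProd.1 → x ≠ y → f x ≠ f y := by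
    intro x y hfst hne hfeq
    have hee : x.edge ≠ y.edge := aux_edge_ne_of_cluster hfst hne
    have hcc : c x.edge ≠ c y.edge := by
      apply hc x.edge x.edge_mem y.edge y.edge_mem hee
      refine ⟨x.toProd.1, ?_, ?_⟩
      · exact Sym2.mem_mk_left _ _
      · rw [hfst]; exact Sym2.mem_mk_left _ _
    apply hcc
    apply Fin.ext
    exact aux_cast_inj_of_lt (c x.edge).isLt (c y.edge).isLt hfeq
  set emb : ZMod (maxDeg X) → Fin (maxDeg X) := fun x => ⟨x.val, ZMod.val_lt x⟩ with hemb
  have embinj : Function.Injective emb := fun x y h => ZMod.val_injective (maxDeg X) (congrArg Fin.val h)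
  set F : X.Dart → X.Dart → Fin (maxDeg X) :=
    fun a b => if a.edge = b.edge then emb (2 * f a) else emb (f a + f b) with hF
  have hFsymm : ∀ a b, F a b = F b a := by
    intro a b
    by_cases h : a.edge = b.edge
    · have hfab : f a = f b := by rw [hf]; simp only [h]
      simp only [hF]
      rw [if_pos h, if_pos h.symm, hfab]
    · have h' : ¬ b.edge = a.edge := fun hh => h hh.symm
      simp only [hF, if_neg h, if_neg h']
      rw [add_comm]
  refine ⟨Sym2.lift ⟨F, hFsymm⟩, ?_⟩
  apply aux_proper_of_local
  intro u a b hua hub hab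
  simp only [Sym2.lift_mk]
  rw [aux_completeTrunc_adj] at hua hub
  obtain ⟨hne_a, hca⟩ := hua
  obtain ⟨hne_b, hcb⟩ := hub
  have key : ∀ x : X.Dart, u ≠ x → u.toProd.1 = x.toProd.1 → F u x = emb (f u + f x) := by
    intro x hne hfst
    simp only [hF]
    rw [if_neg (aux_edge_ne_of_cluster hfst hne)]
  have hmatch : F u u.symm = emb (2 * f u) := by
    simp only [hF]
    rw [if_pos (SimpleGraph.Dart.edge_symm u).symm]
  rcases hca with rfl | hfa <;> rcases hcb with rfl | hfb
  · exact absurd rfl hab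
  · -- a = u.symm (matching), b in cluster
    rw [hmatch, key b hne_b hfb]
    intro h
    have h2 : 2 * f u = f u + f b := embinj h
    rw [two_mul] at h2
    exact hfinj hfb hne_b (add_left_cancel h2)
  · -- b = u.symm, a in cluster
    rw [key a hne_a hfa, hmatch]
    intro h
    have h2 : f u + f a = 2 * f u := embinj h
    rw [two_mul] at h2
    exact hfinj hfa hne_a (add_left_cancel h2.symm)
  · rw [key a hne_a hfa, key b hne_b hfb]
    intro h
    have h2 : f a = f b := add_left_cancel (embinj h)
    exact hfinj (hfa.symm.trans hfb) hab h2

end Aux4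

section Aux5

variable {V : Type*}

lemma aux_coloring_of_even [Finite V] [Nonempty V] (X : SimpleGraph V) (hX : NoIsolated X)
    (hE : Even (maxDeg X)) :
    ∃ C : Sym2 X.Dart → Fin (maxDeg X), IsProperEdgeColoring (completeTrunc X) C := by
  classical
  haveI := aux_dart_finite X
  have hΔ1 : 1 ≤ maxDeg X := aux_maxDeg_pos X hX
  have hΔ2 : 2 ≤ maxDeg X := by
    obtain ⟨t, ht⟩ := hE; omega
  set m : ℕ := maxDeg X - 1 with hm
  have hmodd : Odd m := by
    obtain ⟨t, ht⟩ := hE; exact ⟨t - 1, by omega⟩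
  haveI : NeZero m := ⟨by omega⟩
  have hmlt : m < maxDeg X := by omega
  -- positions: injections of clusters into Fin (maxDeg X)
  have hinj : ∀ v : V, ∃ g : X.Dart → Fin (maxDeg X),
      Set.InjOn g {d : X.Dart | d.toProd.1 = v} := by
    intro v
    apply aux_exists_injOn_fin _ (by omega)
    rw [aux_cluster_ncard]
    exact aux_deg_le_maxDeg X v
  choose P hP using hinj
  set p : X.Dart → Fin (maxDeg X) := fun d => P d.toProd.1 d with hp
  have hpinj : ∀ {x y : X.Dart}, x.toProd.1 = y.toProd.1 → p x = p y → x = y := by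
    intro x y hfst hpq
    simp only [hp] at hpq
    rw [hfst] at hpq
    exact hP y.toProd.1 hfst rfl hpq
  -- the clique coloring of positions
  set col : Fin (maxDeg X) → Fin (maxDeg X) → ZMod m := fun i j =>
    if (i : ℕ) = m then 2 * ((j : ℕ) : ZMod m)
    else if (j : ℕ) = m then 2 * ((i : ℕ) : ZMod m)
    else ((i : ℕ) : ZMod m) + ((j : ℕ) : ZMod m) with hcol
  have hvlt : ∀ x : Fin (maxDeg X), (x : ℕ) ≠ m → (x : ℕ) < m := by
    intro x hx
    have := x.isLt; omega
  have colsymm : ∀ i j, col i j = col j i := by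
    intro i j
    simp only [hcol]
    by_cases h1 : (i : ℕ) = m
    · by_cases h2 : (j : ℕ) = m
      · rw [if_pos h1, if_pos h2, h1, h2]
      · rw [if_pos h1, if_neg h2, if_pos h1]
    · by_cases h2 : (j : ℕ) = m
      · rw [if_neg h1, if_pos h2, if_pos h2]
      · rw [if_neg h1, if_neg h2, if_neg h2, if_neg h1, add_comm]
  have colinj : ∀ i j j' : Fin (maxDeg X), j ≠ i → j' ≠ i → col i j = col i j' → j = j' := by
    intro i j j' hji hj'i h
    by_cases h1 : (i : ℕ) = m
    · have hj : (j : ℕ) ≠ m := fun hh => hji (Fin.ext (hh.trans h1.symm))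
      have hj' : (j' : ℕ) ≠ m := fun hh => hj'i (Fin.ext (hh.trans h1.symm))
      simp only [hcol, if_pos h1] at h
      exact Fin.ext (aux_cast_inj_of_lt (hvlt _ hj) (hvlt _ hj') (aux_two_mul_inj hmodd h))
    · by_cases h2 : (j : ℕ) = m <;> by_cases h3 : (j' : ℕ) = m
      · exact Fin.ext (h2.trans h3.symm)
      · exfalso
        simp only [hcol, if_neg h1, if_pos h2, if_neg h3] at h
        rw [two_mul] at h
        have h4 := add_left_cancel h
        exact hj'i (Fin.ext (aux_cast_inj_of_lt (hvlt _ h3) (hvlt _ h1) h4.symm))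
      · exfalso
        simp only [hcol, if_neg h1, if_neg h2, if_pos h3] at h
        rw [two_mul] at h
        have h4 := add_left_cancel h.symm
        exact hji (Fin.ext (aux_cast_inj_of_lt (hvlt _ h2) (hvlt _ h1) h4.symm))
      · simp only [hcol, if_neg h1, if_neg h2, if_neg h3] at h
        have h4 := add_left_cancel h
        exact Fin.ext (aux_cast_inj_of_lt (hvlt _ h2) (hvlt _ h3) h4)
  set emb : ZMod m → Fin (maxDeg X) := fun x => ⟨x.val, lt_trans (ZMod.val_lt x) hmlt⟩
    with hemb
  have embinj : Function.Injective emb := fun x y h => ZMod.val_injective m (congrArg Fin.val h)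
  have embne : ∀ x : ZMod m, emb x ≠ ⟨m, hmlt⟩ := by
    intro x h
    have := congrArg Fin.val h
    simp only [hemb] at this
    have := ZMod.val_lt x
    omega
  set F : X.Dart → X.Dart → Fin (maxDeg X) :=
    fun a b => if a.edge = b.edge then ⟨m, hmlt⟩ else emb (col (p a) (p b)) with hF
  have hFsymm : ∀ a b, F a b = F b a := by
    intro a b
    by_cases h : a.edge = b.edge
    · simp only [hF]
      rw [if_pos h, if_pos h.symm]
    · have h' : ¬ b.edge = a.edge := fun hh => h hh.symm
      simp only [hF]
      rw [if_neg h, if_neg h', colsymm]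
  refine ⟨Sym2.lift ⟨F, hFsymm⟩, ?_⟩
  apply aux_proper_of_local
  intro u a b hua hub hab
  simp only [Sym2.lift_mk]
  rw [aux_completeTrunc_adj] at hua hub
  obtain ⟨hne_a, hca⟩ := hua
  obtain ⟨hne_b, hcb⟩ := hub
  have key : ∀ x : X.Dart, u ≠ x → u.toProd.1 = x.toProd.1 → F u x = emb (col (p u) (p x)) := by
    intro x hne hfst
    simp only [hF]
    rw [if_neg (aux_edge_ne_of_cluster hfst hne)]
  have hmatch : F u u.symm = ⟨m, hmlt⟩ := by
    simp only [hF]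
    rw [if_pos (SimpleGraph.Dart.edge_symm u).symm]
  rcases hca with rfl | hfa <;> rcases hcb with rfl | hfb
  · exact absurd rfl hab
  · rw [hmatch, key b hne_b hfb]
    exact fun h => embne _ h.symm
  · rw [key a hne_a hfa, hmatch]
    exact fun h => embne _ h
  · rw [key a hne_a hfa, key b hne_b hfb]
    intro h
    have hpa : p a ≠ p u := fun hh => hne_a (hpinj hfa.symm hh).symm
    have hpb : p b ≠ p u := fun hh => hne_b (hpinj hfb.symm hh).symm
    have := colinj (p u) (p a) (p b) hpa hpb (embinj h)
    exact hab (hpinj (hfa.symm.trans hfb) this)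

end Aux5


/-- complete truncations of class I graphs are class I, and complete
truncations of class II graphs of even maximum degree are class I. -/
theorem stmt7 {V : Type*} [Fintype V] (X : SimpleGraph V) (hX : NoIsolated X) :
    (ClassI X → ClassI (completeTrunc X)) ∧
    (¬ ClassI X → Even (maxDeg X) → ClassI (completeTrunc X)) := by
  constructor
  · intro hI
    rcases isEmpty_or_nonempty V with hV | hV
    · exact aux_classI_empty X
    · classical
      have hne : {k | ∃ C : Sym2 V → Fin k, IsProperEdgeColoring X C}.Nonempty := by
        refine ⟨Fintype.card (Sym2 V), fun e => Fintype.equivFin (Sym2 V) e, ?_⟩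
        intro e₁ _ e₂ _ hne12 _
        exact fun h => hne12 ((Fintype.equivFin (Sym2 V)).injective h)
      have hmem : ∃ C : Sym2 V → Fin (chromIndex X), IsProperEdgeColoring X C :=
        Nat.sInf_mem hne
      have hI' : chromIndex X = maxDeg X := hI
      rw [hI'] at hmem
      obtain ⟨c, hc⟩ := hmem
      exact aux_classI_of_exists X hX (aux_coloring_of_classI X hX c hc)
  · intro _ hE
    rcases isEmpty_or_nonempty V with hV | hV
    · exact aux_classI_empty X
    · exact aux_classI_of_exists X hX (aux_coloring_of_even X hX hE)
end

section
/- Let TR(X) be a generalized truncation of a simple graph X with no isolated vertices, and let Δ be the maximum degree of TR(X). If every constituent graph con(v) that contains a vertex whose degree in TR(X) equals Δ is class I (as a graph in its own right), then TR(X) is class I. -/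
open SimpleGraph

namespace VizingAux
set_option linter.unusedSectionVars false
set_option linter.unusedVariables false
set_option linter.unreachableTactic false
set_option linter.unusedTactic false

variable {W : Type*} {n : ℕ}

/-- A symmetric partial edge-coloring given as a function on ordered pairs. -/
def PropC (c : W → W → Option (Fin n)) : Prop :=
  (∀ u v, c u v = c v u) ∧ (∀ u, c u u = none) ∧
    ∀ ⦃u v w⦄, c u v = c u w → (c u v).isSome → v = w

/-- The coloring is supported on edges of `G`. -/
def Supp (G : SimpleGraph W) (c : W → W → Option (Fin n)) : Prop :=
  ∀ u v, (c u v).isSome → G.Adj u v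

/-- Color `a` is missing at `u`. -/
def Miss (c : W → W → Option (Fin n)) (u : W) (a : Fin n) : Prop :=
  ∀ v, c u v ≠ some a

variable [DecidableEq W]

/-- Set the color of the edge `xy` to `a`. -/
def setC (c : W → W → Option (Fin n)) (x y : W) (a : Fin n) : W → W → Option (Fin n) :=
  fun u v => if (u = x ∧ v = y) ∨ (u = y ∧ v = x) then some a else c u v

/-- Remove the color of the edge `xy`. -/
def unsetC (c : W → W → Option (Fin n)) (x y : W) : W → W → Option (Fin n) :=
  fun u v => if (u = x ∧ v = y) ∨ (u = y ∧ v = x) then none else c u v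

lemma setC_eq (c : W → W → Option (Fin n)) (x y : W) (a : Fin n) : setC c x y a x y = some a := by
  simp [setC]

lemma setC_of_ne (c : W → W → Option (Fin n)) (x y : W) (a : Fin n) {u v : W}
    (h : ¬ ((u = x ∧ v = y) ∨ (u = y ∧ v = x))) : setC c x y a u v = c u v := by
  simp only [setC, if_neg h]

lemma unsetC_of_ne (c : W → W → Option (Fin n)) (x y : W) {u v : W}
    (h : ¬ ((u = x ∧ v = y) ∨ (u = y ∧ v = x))) : unsetC c x y u v = c u v := by
  simp only [unsetC, if_neg h]

lemma PropC.unique {c : W → W → Option (Fin n)} (hP : PropC c) {u v w : W} {a : Fin n}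
    (h1 : c u v = some a) (h2 : c u w = some a) : v = w :=
  hP.2.2 (h1.trans h2.symm) (by simp [h1])

lemma unsetC_propC {c : W → W → Option (Fin n)} (hP : PropC c) (x y : W) :
    PropC (unsetC c x y) := by
  refine ⟨fun u v => ?_, fun u => ?_, fun u v w h hs => ?_⟩
  · unfold unsetC
    by_cases h : (u = x ∧ v = y) ∨ (u = y ∧ v = x)
    · rw [if_pos h, if_pos (by tauto)]
    · rw [if_neg h, if_neg (by tauto), hP.1]
  · unfold unsetC
    by_cases h : (u = x ∧ u = y) ∨ (u = y ∧ u = x)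
    · rw [if_pos h]
    · rw [if_neg h]; exact hP.2.1 u
  · rcases Option.isSome_iff_exists.1 hs with ⟨a, ha⟩
    rw [ha] at h
    have h1 : c u v = some a := by
      by_cases hc : (u = x ∧ v = y) ∨ (u = y ∧ v = x)
      · rw [unsetC, if_pos hc] at ha; exact absurd ha (by simp)
      · rw [unsetC_of_ne _ _ _ hc] at ha; exact ha
    have h2 : c u w = some a := by
      by_cases hc : (u = x ∧ w = y) ∨ (u = y ∧ w = x)
      · rw [unsetC, if_pos hc] at h; exact absurd h.symm (by simp)
      · rw [unsetC_of_ne _ _ _ hc] at h; exact h.symm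
    exact hP.unique h1 h2

lemma unsetC_miss {c : W → W → Option (Fin n)} {u : W} {a : Fin n} (h : Miss c u a) (x y : W) :
    Miss (unsetC c x y) u a := by
  intro v
  by_cases hc : (u = x ∧ v = y) ∨ (u = y ∧ v = x)
  · rw [unsetC, if_pos hc]; simp
  · rw [unsetC_of_ne _ _ _ hc]; exact h v

/-- After removing the color of `x y`, the old color of `x y` is missing at `x`. -/
lemma unsetC_miss_self {c : W → W → Option (Fin n)} (hP : PropC c) {x y : W} {a : Fin n}
    (h : c x y = some a) : Miss (unsetC c x y) x a := by
  intro v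
  by_cases hc : (x = x ∧ v = y) ∨ (x = y ∧ v = x)
  · rw [unsetC, if_pos hc]; simp
  · rw [unsetC_of_ne _ _ _ hc]
    intro hv
    have : v = y := hP.unique hv h
    exact hc (Or.inl ⟨rfl, this⟩)

lemma setC_propC {c : W → W → Option (Fin n)} (hP : PropC c) {x y : W} {a : Fin n}
    (hxy : x ≠ y) (hx : Miss c x a) (hy : Miss c y a) : PropC (setC c x y a) := by
  refine ⟨fun u v => ?_, fun u => ?_, fun u v w h hs => ?_⟩
  · unfold setC
    by_cases h : (u = x ∧ v = y) ∨ (u = y ∧ v = x)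
    · rw [if_pos h, if_pos (by tauto)]
    · rw [if_neg h, if_neg (by tauto), hP.1]
  · unfold setC
    rw [if_neg (by rintro (⟨rfl, rfl⟩ | ⟨rfl, rfl⟩) <;> exact hxy rfl)]
    exact hP.2.1 u
  · by_cases hc : (u = x ∧ v = y) ∨ (u = y ∧ v = x)
    · -- c' u v = some a
      have huv : setC c x y a u v = some a := by rw [setC, if_pos hc]
      rw [huv] at h
      by_cases hc2 : (u = x ∧ w = y) ∨ (u = y ∧ w = x)
      · rcases hc with ⟨rfl, rfl⟩ | ⟨rfl, rfl⟩ <;> rcases hc2 with ⟨h1, rfl⟩ | ⟨h1, rfl⟩ <;>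
          first | rfl | (exact absurd h1 hxy) | (exact absurd h1 hxy.symm) |
            (exact absurd rfl hxy)
      · rw [setC_of_ne _ _ _ _ hc2] at h
        rcases hc with ⟨rfl, rfl⟩ | ⟨rfl, rfl⟩
        · exact absurd h.symm (hx w)
        · exact absurd h.symm (hy w)
    · have huv : setC c x y a u v = c u v := setC_of_ne _ _ _ _ hc
      rw [huv] at h hs
      by_cases hc2 : (u = x ∧ w = y) ∨ (u = y ∧ w = x)
      · have : setC c x y a u w = some a := by rw [setC, if_pos hc2]
        rw [this] at h
        rcases hc2 with ⟨rfl, rfl⟩ | ⟨rfl, rfl⟩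
        · exact absurd h (hx v)
        · exact absurd h (hy v)
      · rw [setC_of_ne _ _ _ _ hc2] at h
        exact hP.2.2 h hs

lemma setC_supp {G : SimpleGraph W} {c : W → W → Option (Fin n)} (hS : Supp G c) {x y : W}
    (hadj : G.Adj x y) (a : Fin n) : Supp G (setC c x y a) := by
  intro u v h
  by_cases hc : (u = x ∧ v = y) ∨ (u = y ∧ v = x)
  · rcases hc with ⟨rfl, rfl⟩ | ⟨rfl, rfl⟩
    · exact hadj
    · exact hadj.symm
  · rw [setC_of_ne _ _ _ _ hc] at h
    exact hS u v h

lemma unsetC_supp {G : SimpleGraph W} {c : W → W → Option (Fin n)} (hS : Supp G c) (x y : W) :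
    Supp G (unsetC c x y) := by
  intro u v h
  by_cases hc : (u = x ∧ v = y) ∨ (u = y ∧ v = x)
  · rw [unsetC, if_pos hc] at h; simp at h
  · rw [unsetC_of_ne _ _ _ hc] at h
    exact hS u v h

lemma setC_isSome {c : W → W → Option (Fin n)} {x y u v : W} {a : Fin n}
    (h : (c u v).isSome) : ((setC c x y a) u v).isSome := by
  by_cases hc : (u = x ∧ v = y) ∨ (u = y ∧ v = x)
  · rw [setC, if_pos hc]; simp
  · rw [setC_of_ne _ _ _ _ hc]; exact h


section Swap
variable {W : Type*} {n : ℕ}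
/-- The transposition of `some α` and `some β` on `Option (Fin n)`. -/
def sigma (α β : Fin n) : Option (Fin n) → Option (Fin n) :=
  fun o => if o = some α then some β else if o = some β then some α else o

lemma sigma_sigma (α β : Fin n) (o : Option (Fin n)) : sigma α β (sigma α β o) = o := by
  unfold sigma
  split_ifs <;> simp_all

lemma sigma_inj (α β : Fin n) : Function.Injective (sigma α β) :=
  Function.LeftInverse.injective (g := sigma α β) (sigma_sigma α β)

lemma sigma_eq_some_iff {α β γ : Fin n} (h1 : γ ≠ α) (h2 : γ ≠ β) (o : Option (Fin n)) :
    sigma α β o = some γ ↔ o = some γ := by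
  unfold sigma
  split_ifs with a1 a2 <;> simp_all
  · exact iff_of_false (fun h => h2 h.symm) (fun h => h1 h.symm)
  · exact iff_of_false (fun h => h1 h.symm) (fun h => h2 h.symm)

lemma sigma_eq_some_left {α β : Fin n} (hab : α ≠ β) (o : Option (Fin n)) :
    sigma α β o = some α ↔ o = some β := by
  unfold sigma
  split_ifs with a1 a2 <;> simp_all
  exact fun h => hab h.symm

lemma sigma_isSome (α β : Fin n) (o : Option (Fin n)) :
    (sigma α β o).isSome = o.isSome := by
  unfold sigma; split_ifs <;> simp_all

lemma sigma_of_fixed {α β : Fin n} {o : Option (Fin n)} (h1 : o ≠ some α) (h2 : o ≠ some β) :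
    sigma α β o = o := by
  unfold sigma; split_ifs <;> simp_all

/-- Swap colors `α`, `β` on all edges inside `S`. -/
noncomputable def swapC (c : W → W → Option (Fin n)) (α β : Fin n) (S : Set W) :
    W → W → Option (Fin n) :=
  fun u v => @ite _ (u ∈ S ∧ v ∈ S) (Classical.dec _) (sigma α β (c u v)) (c u v)

/-- `S` is closed under `αβ`-edges. -/
def Closed (c : W → W → Option (Fin n)) (α β : Fin n) (S : Set W) : Prop :=
  ∀ u v, u ∈ S → (c u v = some α ∨ c u v = some β) → v ∈ S

variable {c : W → W → Option (Fin n)} {α β : Fin n} {S : Set W}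

/-- On a row indexed by `u ∈ S`, the swap is just `σ`. -/
lemma swapC_row_mem (hcl : Closed c α β S) {u : W} (hu : u ∈ S) (v : W) :
    swapC c α β S u v = sigma α β (c u v) := by
  rw [swapC]
  by_cases hv : v ∈ S
  · rw [if_pos ⟨hu, hv⟩]
  · rw [if_neg (by tauto)]
    have h1 : c u v ≠ some α := fun h => hv (hcl u v hu (Or.inl h))
    have h2 : c u v ≠ some β := fun h => hv (hcl u v hu (Or.inr h))
    rw [sigma_of_fixed h1 h2]

/-- On a row indexed by `u ∉ S`, the swap does nothing. -/
lemma swapC_row_not_mem (hsymm : ∀ u v, c u v = c v u) (hcl : Closed c α β S)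
    {u : W} (hu : u ∉ S) (v : W) :
    swapC c α β S u v = c u v := by
  rw [swapC, if_neg (by tauto)]

lemma swapC_isSome (hsymm : ∀ u v, c u v = c v u) (hcl : Closed c α β S) (u v : W) :
    ((swapC c α β S) u v).isSome = (c u v).isSome := by
  by_cases hu : u ∈ S
  · rw [swapC_row_mem hcl hu, sigma_isSome]
  · rw [swapC_row_not_mem hsymm hcl hu]

lemma swapC_propC (hP : PropC c) (hcl : Closed c α β S) : PropC (swapC c α β S) := by
  refine ⟨fun u v => ?_, fun u => ?_, fun u v w h hs => ?_⟩
  · rw [swapC, swapC]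
    by_cases h : u ∈ S ∧ v ∈ S
    · rw [if_pos h, if_pos (by tauto), hP.1]
    · rw [if_neg h, if_neg (by tauto), hP.1]
  · by_cases hu : u ∈ S
    · rw [swapC_row_mem hcl hu, hP.2.1 u]
      rfl
    · rw [swapC_row_not_mem hP.1 hcl hu, hP.2.1 u]
  · by_cases hu : u ∈ S
    · rw [swapC_row_mem hcl hu] at h hs
      rw [swapC_row_mem hcl hu] at h
      have := sigma_inj α β h
      exact hP.2.2 this (by rw [← sigma_isSome α β]; exact hs)
    · rw [swapC_row_not_mem hP.1 hcl hu] at h hs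
      rw [swapC_row_not_mem hP.1 hcl hu] at h
      exact hP.2.2 h hs

lemma swapC_supp {G : SimpleGraph W} (hS : Supp G c) (hsymm : ∀ u v, c u v = c v u)
    (hcl : Closed c α β S) : Supp G (swapC c α β S) := by
  intro u v h
  rw [swapC_isSome hsymm hcl] at h
  exact hS u v h

/-- Missing colors outside `{α, β}` are preserved. -/
lemma swapC_miss_other (hP : PropC c) (hcl : Closed c α β S) {u : W} {γ : Fin n}
    (h1 : γ ≠ α) (h2 : γ ≠ β) (hm : Miss c u γ) : Miss (swapC c α β S) u γ := by
  intro v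
  by_cases hu : u ∈ S
  · intro hv
    rw [swapC_row_mem hcl hu, sigma_eq_some_iff h1 h2] at hv
    exact hm v hv
  · rw [swapC_row_not_mem hP.1 hcl hu]
    exact hm v

/-- A vertex of `S` missing `β` misses `α` after the swap. -/
lemma swapC_miss_in (hP : PropC c) (hcl : Closed c α β S) (hab : α ≠ β) {u : W}
    (hu : u ∈ S) (hm : Miss c u β) : Miss (swapC c α β S) u α := by
  intro v
  intro hv
  rw [swapC_row_mem hcl hu, sigma_eq_some_left hab] at hv
  exact hm v hv

/-- Vertices outside `S` keep all their missing colors. -/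
lemma swapC_miss_out (hP : PropC c) (hcl : Closed c α β S) {u : W} {γ : Fin n}
    (hu : u ∉ S) (hm : Miss c u γ) : Miss (swapC c α β S) u γ := by
  intro v
  rw [swapC_row_not_mem hP.1 hcl hu]
  exact hm v

/-- Edges at a vertex outside `S` are unchanged. -/
lemma swapC_eq_out (hP : PropC c) (hcl : Closed c α β S) {u : W} (hu : u ∉ S) (v : W) :
    swapC c α β S u v = c u v :=
  swapC_row_not_mem hP.1 hcl hu v

end Swap

section Fan
variable {W : Type*} {n : ℕ} [DecidableEq W]
/-- `w` can follow `u` in a fan centered at `x`. -/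
def FanRel (c : W → W → Option (Fin n)) (x u w : W) : Prop :=
  ∃ b, c x w = some b ∧ Miss c u b

/-- `l` is a fan at `x`. -/
def IsFan (G : SimpleGraph W) (c : W → W → Option (Fin n)) (x : W) (l : List W) : Prop :=
  l.Chain' (FanRel c x) ∧ l.Nodup ∧ (∀ y ∈ l, G.Adj x y) ∧ x ∉ l

lemma chain'_imp_mem {α : Type*} {R R' : α → α → Prop} :
    ∀ l : List α, (∀ a b, a ∈ l → b ∈ l.tail → R a b → R' a b) → l.Chain' R → l.Chain' R'
  | [], _, _ => List.isChain_nil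
  | [a], _, _ => List.isChain_singleton a
  | a :: b :: l, h, hc => by
    simp only [List.Chain', List.isChain_cons_cons] at hc ⊢
    refine ⟨h a b (by simp) (by simp) hc.1, chain'_imp_mem (b :: l) ?_ hc.2⟩
    intro p q hp hq hr
    exact h p q (by simp [List.mem_cons] at hp ⊢; tauto) (by simp at hq ⊢; tauto) hr

/-- Rotating a fan: the uncolored edge `x y₀` can be colored, provided some color `a`
is missing both at `x` and at the last vertex of the fan. -/
lemma rotate {G : SimpleGraph W} {x : W} :
    ∀ (l : List W) (c : W → W → Option (Fin n)) (y₀ : W) (a : Fin n),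
      PropC c → Supp G c → IsFan G c x (y₀ :: l) → c x y₀ = none →
      Miss c x a → Miss c ((y₀ :: l).getLast (List.cons_ne_nil _ _)) a →
      ∃ c' : W → W → Option (Fin n), PropC c' ∧ Supp G c' ∧ (∀ u v, (c u v).isSome → (c' u v).isSome) ∧
        (c' x y₀).isSome := by
  intro l
  induction l with
  | nil =>
    intro c y₀ a hP hS hfan hnone hmx hml
    have hxy : x ≠ y₀ := by
      intro h; exact hfan.2.2.2 (h ▸ List.mem_singleton_self _)
    have hmy : Miss c y₀ a := by simpa using hml
    refine ⟨setC c x y₀ a, setC_propC hP hxy hmx hmy,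
      setC_supp hS (hfan.2.2.1 y₀ (by simp)) a, fun u v h => setC_isSome h, ?_⟩
    rw [setC_eq]; simp
  | cons y₁ t ih =>
    intro c y₀ a hP hS hfan hnone hmx hml
    obtain ⟨hchain, hnodup, hadj, hxmem⟩ := hfan
    simp only [List.Chain', List.isChain_cons_cons] at hchain
    obtain ⟨⟨a₁, hxy₁, hm01⟩, hchain'⟩ := hchain
    have hxy0 : x ≠ y₀ := fun h => hxmem (by simp [h])
    have hxy1 : x ≠ y₁ := fun h => hxmem (by simp [h])
    have hy01 : y₀ ≠ y₁ := by
      intro h; rw [List.nodup_cons] at hnodup; exact hnodup.1 (by simp [h])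
    have hy0t : y₀ ∉ y₁ :: t := by
      rw [List.nodup_cons] at hnodup; exact hnodup.1
    set c₀ := unsetC c x y₁ with hc₀
    set c₁ := setC c₀ x y₀ a₁ with hc₁
    have hP₀ : PropC c₀ := unsetC_propC hP x y₁
    have hm0x : Miss c₀ x a₁ := unsetC_miss_self hP hxy₁
    have hm0y : Miss c₀ y₀ a₁ := unsetC_miss hm01 x y₁
    have hP₁ : PropC c₁ := setC_propC hP₀ hxy0 hm0x hm0y
    have hS₁ : Supp G c₁ := setC_supp (unsetC_supp hS x y₁) (hadj y₀ (by simp)) a₁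
    -- rows away from x, y₀ keep missing colors
    have missPres : ∀ u (b : Fin n), u ≠ x → u ≠ y₀ → Miss c u b → Miss c₁ u b := by
      intro u b hux huy hm v
      rw [hc₁, setC_of_ne _ _ _ _ (by tauto)]
      by_cases hp : (u = x ∧ v = y₁) ∨ (u = y₁ ∧ v = x)
      · rw [hc₀, unsetC, if_pos hp]; simp
      · rw [hc₀, unsetC_of_ne _ _ _ hp]; exact hm v
    -- values of c₁ on the x-row, away from y₀ y₁
    have hrowx : ∀ v, v ≠ y₀ → v ≠ y₁ → c₁ x v = c x v := by
      intro v h0 h1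
      rw [hc₁, setC_of_ne _ _ _ _ (by tauto), hc₀, unsetC_of_ne _ _ _ (by tauto)]
    have hc₁x0 : c₁ x y₀ = some a₁ := setC_eq _ _ _ _
    have hc₁x1 : c₁ x y₁ = none := by
      rw [hc₁, setC_of_ne _ _ _ _ (by tauto), hc₀, unsetC, if_pos (by tauto)]
    have hfan₁ : IsFan G c₁ x (y₁ :: t) := by
      refine ⟨?_, (List.nodup_cons.1 hnodup).2, fun y hy => hadj y (by simp [hy]),
        fun h => hxmem (by simp [h])⟩
      refine chain'_imp_mem _ ?_ hchain'
      rintro p q hp hq ⟨b, hb, hmb⟩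
      have hqt : q ∈ t := hq
      have hq0 : q ≠ y₀ := fun h => hy0t (by simp [← h, hqt])
      have hq1 : q ≠ y₁ := fun h => (List.nodup_cons.1 (List.nodup_cons.1 hnodup).2).1 (h ▸ hqt)
      refine ⟨b, by rw [hrowx q hq0 hq1]; exact hb, ?_⟩
      have hpx : p ≠ x := fun h => hxmem (by simp [← h, hp])
      have hpy0 : p ≠ y₀ := fun h => hy0t (h ▸ hp)
      exact missPres p b hpx hpy0 hmb
    have hnone₁ : c₁ x y₁ = none := hc₁x1
    have hmx₁ : Miss c₁ x a := by
      have haa₁ : a ≠ a₁ := by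
        intro h; exact hmx y₁ (by rw [hxy₁, h])
      intro v
      by_cases h0 : v = y₀
      · rw [h0, hc₁x0]; simp


        exact fun h => haa₁ h.symm
      · by_cases h1 : v = y₁
        · rw [h1, hc₁x1]; simp
        · rw [hrowx v h0 h1]; exact hmx v
    have hml₁ : Miss c₁ ((y₁ :: t).getLast (List.cons_ne_nil _ _)) a := by
      have hlast : ((y₀ :: y₁ :: t).getLast (List.cons_ne_nil _ _)) =
          ((y₁ :: t).getLast (List.cons_ne_nil _ _)) := List.getLast_cons _
      have hmem : ((y₁ :: t).getLast (List.cons_ne_nil _ _)) ∈ y₁ :: t := List.getLast_mem _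
      have h1 : ((y₁ :: t).getLast (List.cons_ne_nil _ _)) ≠ x := fun h => hxmem (by simp [← h, hmem])
      have h2 : ((y₁ :: t).getLast (List.cons_ne_nil _ _)) ≠ y₀ := fun h => hy0t (h ▸ hmem)
      exact missPres _ a h1 h2 (hlast ▸ hml)
    obtain ⟨c'', hP'', hS'', hmono'', hsome''⟩ := ih c₁ y₁ a hP₁ hS₁ hfan₁ hnone₁ hmx₁ hml₁
    refine ⟨c'', hP'', hS'', ?_, hmono'' _ _ (by rw [hc₁x0]; simp)⟩
    intro u v h
    by_cases hp : (u = x ∧ v = y₁) ∨ (u = y₁ ∧ v = x)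
    · rcases hp with ⟨rfl, rfl⟩ | ⟨rfl, rfl⟩
      · exact hsome''
      · rw [hP''.1]; exact hsome''
    · apply hmono''
      by_cases hp0 : (u = x ∧ v = y₀) ∨ (u = y₀ ∧ v = x)
      · rw [hc₁, setC, if_pos hp0]; simp
      · rw [hc₁, setC_of_ne _ _ _ _ hp0, hc₀, unsetC_of_ne _ _ _ hp]; exact h


end Fan
section Count
variable {W : Type*} {n : ℕ}
/-- A missing color exists at every vertex of degree `< n`. -/
lemma exists_miss [Fintype W] {G : SimpleGraph W} [DecidableRel G.Adj]
    {c : W → W → Option (Fin n)} (hS : Supp G c) {u : W} (hd : G.degree u < n) :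
    ∃ a : Fin n, Miss c u a := by
  classical
  have hn : 0 < n := lt_of_le_of_lt (Nat.zero_le _) hd
  set T : Finset W := Finset.univ.filter (fun v => (c u v).isSome) with hT
  have hTsub : T ⊆ G.neighborFinset u := by
    intro v hv
    rw [mem_neighborFinset]
    exact hS u v (by simpa [hT] using hv)
  set f : W → Fin n := fun v => (c u v).getD ⟨0, hn⟩ with hf
  by_contra hcon
  push_neg at hcon
  have himg : ∀ a : Fin n, a ∈ T.image f := by
    intro a
    obtain ⟨v, hv⟩ := not_forall.1 (hcon a)
    rw [not_not] at hv
    exact Finset.mem_image.2 ⟨v, by simp [hT, hv], by simp [hf, hv]⟩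
  have h1 : n ≤ T.card := by
    calc n = (Finset.univ : Finset (Fin n)).card := by simp
    _ ≤ (T.image f).card := Finset.card_le_card (fun a _ => himg a)
    _ ≤ T.card := Finset.card_image_le
  have h2 : T.card ≤ G.degree u := Finset.card_le_card hTsub
  omega

lemma exists_closer {G : SimpleGraph W} {x u : W} (h : G.Reachable x u) (hne : u ≠ x) :
    ∃ w, G.Adj u w ∧ G.dist x w + 1 = G.dist x u := by
  obtain ⟨p, hp⟩ := (h.symm).exists_walk_length_eq_dist
  cases p with
  | nil => exact absurd rfl hne
  | @cons _ w _ hadj q =>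
    refine ⟨w, hadj, ?_⟩
    have h1 : G.dist x w ≤ q.length := by
      rw [dist_comm]
      exact dist_le q
    have h2 : q.length + 1 = G.dist x u := by
      simpa [dist_comm] using hp
    have hreach : G.Reachable x w := ⟨q.reverse⟩
    obtain ⟨r, hr⟩ := hreach.exists_walk_length_eq_dist
    have h3 : G.dist x u ≤ G.dist x w + 1 := by
      have := dist_le (r.append (Walk.cons hadj.symm Walk.nil))
      simpa [hr] using this
    omega

/-- A connected graph with maximum degree two cannot contain three distinct
vertices of degree at most one. -/
lemma three_pendant [Fintype W] (G : SimpleGraph W) [DecidableRel G.Adj]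
    (hdeg : ∀ u, G.degree u ≤ 2) {x p q : W} (hxp : x ≠ p) (hxq : x ≠ q) (hpq : p ≠ q)
    (hx : G.degree x ≤ 1) (hp : G.degree p ≤ 1) (hq : G.degree q ≤ 1)
    (hrp : G.Reachable x p) (hrq : G.Reachable x q)
    (hedge : ∀ u v, G.Adj u v → G.Reachable x u) : False := by
  classical
  set K : Finset W := Finset.univ.filter (fun u => G.Reachable x u) with hK
  have hxK : x ∈ K := by
    simp only [hK, Finset.mem_filter, Finset.mem_univ, true_and]
    exact Reachable.refl x
  have htriple : ({x, p, q} : Finset W) ⊆ K := by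
    intro u hu
    simp only [Finset.mem_insert, Finset.mem_singleton] at hu
    rcases hu with rfl | rfl | rfl
    · exact hxK
    · simp [hK, hrp]
    · simp [hK, hrq]
  have hcard3 : ({x, p, q} : Finset W).card = 3 := by
    rw [Finset.card_insert_of_notMem (by simp [hxp, hxq]),
      Finset.card_insert_of_notMem (by simp [hpq]), Finset.card_singleton]
  have hk3 : 3 ≤ K.card := hcard3 ▸ Finset.card_le_card htriple
  -- injection from K.erase x into the edge set
  set wfun : W → W := fun u =>
    if h : ∃ w, G.Adj u w ∧ G.dist x w + 1 = G.dist x u then h.choose else u with hwfun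
  have hwspec : ∀ u ∈ K.erase x, G.Adj u (wfun u) ∧ G.dist x (wfun u) + 1 = G.dist x u := by
    intro u hu
    rw [Finset.mem_erase] at hu
    have hr : G.Reachable x u := by
      have := hu.2
      simp only [hK, Finset.mem_filter, Finset.mem_univ, true_and] at this
      exact this
    have hex := exists_closer hr hu.1
    rw [hwfun]
    simp only [dif_pos hex]
    exact hex.choose_spec
  have hmaps : ∀ u ∈ K.erase x, s(u, wfun u) ∈ G.edgeFinset := by
    intro u hu
    rw [mem_edgeFinset, mem_edgeSet]
    exact (hwspec u hu).1
  have hinj : Set.InjOn (fun u => s(u, wfun u)) (K.erase x) := by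
    intro u hu u' hu' heq
    simp only [Sym2.eq_iff] at heq
    rcases heq with ⟨h1, h2⟩ | ⟨h1, h2⟩
    · exact h1
    · have e1 := (hwspec u hu).2
      have e2 := (hwspec u' hu').2
      rw [← h1] at e2
      rw [h2] at e1
      omega
  have hcardE : K.card - 1 ≤ G.edgeFinset.card := by
    have := Finset.card_le_card_of_injOn (fun u => s(u, wfun u)) hmaps hinj
    rwa [Finset.card_erase_of_mem hxK] at this
  -- degree sum
  have hsum : ∑ v, G.degree v = 2 * G.edgeFinset.card := G.sum_degrees_eq_twice_card_edges
  have hdeg0 : ∀ u, u ∉ K → G.degree u = 0 := by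
    intro u hu
    rw [← card_neighborFinset_eq_degree, Finset.card_eq_zero]
    ext v
    simp only [mem_neighborFinset, Finset.notMem_empty, iff_false]
    intro hadj
    exact hu (by simp [hK, hedge u v hadj])
  have hsplit : ∑ v, G.degree v = ∑ v ∈ K, G.degree v := by
    rw [← Finset.sum_filter_add_sum_filter_not Finset.univ (fun u => G.Reachable x u)]
    have hzero : ∑ v ∈ Finset.univ.filter (fun u => ¬ G.Reachable x u), G.degree v = 0 := by
      apply Finset.sum_eq_zero
      intro u hu
      simp only [Finset.mem_filter] at hu
      exact hdeg0 u (by simp [hK, hu.2])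
    rw [hzero, add_zero]
  have h1 : ∑ v ∈ K \ {x, p, q}, G.degree v ≤ 2 * (K.card - 3) := by
    calc ∑ v ∈ K \ {x, p, q}, G.degree v ≤ (K \ {x,p,q}).card * 2 :=
          Finset.sum_le_card_nsmul _ _ 2 (fun u _ => hdeg u)
    _ = 2 * (K.card - 3) := by
          rw [Finset.card_sdiff_of_subset htriple, hcard3, Nat.mul_comm]
  have h2 : ∑ v ∈ ({x, p, q} : Finset W), G.degree v ≤ 3 := by
    rw [Finset.sum_insert (by simp [hxp, hxq]), Finset.sum_insert (by simp [hpq]),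
      Finset.sum_singleton]
    omega
  have hKsum : ∑ v ∈ K, G.degree v ≤ 2 * (K.card - 3) + 3 := by
    rw [← Finset.sum_sdiff htriple]
    omega
  rw [hsplit] at hsum
  omega

end Count

section Extend
variable {W : Type*} {n : ℕ} [Fintype W] [DecidableEq W]

/-- Vizing's extension step: an uncolored edge of `G` can be colored,
possibly after recoloring, provided all degrees are `< n`. -/
lemma extend {G : SimpleGraph W} [DecidableRel G.Adj]
    (hd : ∀ w, G.degree w < n) {c : W → W → Option (Fin n)} (hP : PropC c) (hS : Supp G c)
    {x y₀ : W} (hadj : G.Adj x y₀) (hnone : c x y₀ = none) :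
    ∃ c' : W → W → Option (Fin n), PropC c' ∧ Supp G c' ∧
      (∀ u v, (c u v).isSome → (c' u v).isSome) ∧ (c' x y₀).isSome := by
  classical
  have hfan0 : IsFan G c x [y₀] := by
    refine ⟨List.isChain_singleton _, List.nodup_singleton _, ?_, ?_⟩
    · intro y hy; rw [List.mem_singleton] at hy; exact hy ▸ hadj
    · rw [List.mem_singleton]; exact hadj.ne
  set F : Set ℕ := {k | ∃ l : List W, IsFan G c x (y₀ :: l) ∧ k = (y₀ :: l).length} with hF
  have hFne : F.Nonempty := ⟨1, [], hfan0, rfl⟩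
  have hFbdd : BddAbove F := by
    refine ⟨Fintype.card W, ?_⟩
    rintro k ⟨l, hfan, rfl⟩
    exact hfan.2.1.length_le_card
  obtain ⟨l, hfan, hklen⟩ := Nat.sSup_mem hFne hFbdd
  have hmaxlen : ∀ l' : List W, IsFan G c x (y₀ :: l') → (y₀ :: l').length ≤ sSup F :=
    fun l' h => le_csSup hFbdd ⟨l', h, rfl⟩
  set yk := (y₀ :: l).getLast (List.cons_ne_nil _ _) with hyk
  obtain ⟨β, hβ⟩ := exists_miss hS (hd yk)
  by_cases hβx : Miss c x β
  · exact rotate l c y₀ β hP hS hfan hnone hβx hβ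
  obtain ⟨z, hz⟩ : ∃ z, c x z = some β := by
    rw [Miss] at hβx; push_neg at hβx
    exact hβx
  have hzx : z ≠ x := by
    intro h; rw [h, hP.2.1] at hz; exact absurd hz (by simp)
  have hzmem : z ∈ y₀ :: l := by
    by_contra hznot
    have hchain2 : List.Chain' (FanRel c x) ((y₀ :: l) ++ [z]) := by
      simp only [List.Chain', List.isChain_append]
      refine ⟨hfan.1, List.isChain_singleton _, ?_⟩
      intro a ha b hb
      rw [List.getLast?_eq_getLast_of_ne_nil (List.cons_ne_nil _ _), Option.mem_def,
        Option.some_inj] at ha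
      rw [List.head?_cons, Option.mem_def, Option.some_inj] at hb
      rw [← ha, ← hb]
      exact ⟨β, hz, hβ⟩
    have hfan2 : IsFan G c x ((y₀ :: l) ++ [z]) := by
      refine ⟨hchain2, ?_, ?_, ?_⟩
      · rw [List.nodup_append]
        refine ⟨hfan.2.1, List.nodup_singleton _, ?_⟩
        intro a ha b hb hab
        rw [List.mem_singleton] at hb
        rw [hab, hb] at ha
        exact hznot ha
      · intro y hy
        rw [List.mem_append, List.mem_singleton] at hy
        rcases hy with hy | rfl
        · exact hfan.2.2.1 y hy
        · exact hS x y (by rw [hz]; rfl)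
      · rw [List.mem_append, List.mem_singleton]
        rintro (h | h)
        · exact hfan.2.2.2 h
        · exact hzx h.symm
    have := hmaxlen (l ++ [z]) (by rwa [← List.cons_append])
    rw [hklen] at this
    simp at this
  have hzy0 : z ≠ y₀ := by
    intro h; rw [h, hnone] at hz; exact absurd hz (by simp)
  have hzl : z ∈ l := by
    rcases List.mem_cons.1 hzmem with h | h
    · exact absurd h hzy0
    · exact h
  obtain ⟨s, t, hlst⟩ := List.append_of_mem hzl
  have hfull : y₀ :: l = (y₀ :: s) ++ z :: t := by rw [hlst]; rfl
  set pred := (y₀ :: s).getLast (List.cons_ne_nil _ _) with hpred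
  have hchainfull := hfan.1
  rw [hfull] at hchainfull; simp only [List.Chain', List.isChain_append] at hchainfull
  obtain ⟨ch1, ch2, hbound⟩ := hchainfull
  have hpredβ : Miss c pred β := by
    have hb := hbound pred (by
      rw [List.getLast?_eq_getLast_of_ne_nil (List.cons_ne_nil _ _)]; rfl) z (by rfl)
    obtain ⟨b, hbz, hmb⟩ := hb
    have hbβ : b = β := Option.some_inj.1 (hbz.symm.trans hz)
    exact hbβ ▸ hmb
  obtain ⟨α, hα⟩ := exists_miss hS (hd x)
  have hαβ : α ≠ β := fun h => hα z (h ▸ hz)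
  set R : W → W → Prop := fun u v => c u v = some α ∨ c u v = some β with hR
  have hRsymm : ∀ u v, R u v → R v u := by
    intro u v h
    show c v u = some α ∨ c v u = some β
    rw [hP.1 v u]
    exact h
  set Reach := Relation.ReflTransGen R with hReach
  have hReachSymm : ∀ u v, Reach u v → Reach v u := fun u v h =>
    by haveI : Std.Symm R := ⟨fun a b hab => hRsymm a b hab⟩; exact Std.Symm.symm (r := Relation.ReflTransGen R) _ _ h
  have hclosed : ∀ w₀ : W, Closed c α β {u | Reach w₀ u} := by
    intro w₀ u v hu hcv
    exact Relation.ReflTransGen.tail hu hcv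
  have htransfer : ∀ S : Set W, Closed c α β S → x ∉ S →
      ∀ L : List W, z ∉ L.tail → L.Chain' (FanRel c x) →
        L.Chain' (FanRel (swapC c α β S) x) := by
    intro S hcl hxS L hzL hch
    refine chain'_imp_mem L ?_ hch
    rintro a b ha hb ⟨bc, hcb, hmb⟩
    have hbα : bc ≠ α := fun h => hα b (h ▸ hcb)
    have hbβ : bc ≠ β := by
      intro h
      exact hzL (by rw [← hP.unique (h ▸ hcb) hz]; exact hb)
    refine ⟨bc, ?_, swapC_miss_other hP hcl hbα hbβ hmb⟩
    rw [swapC_eq_out hP hcl hxS]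
    exact hcb
  have hzs : z ∉ s ∧ z ∉ t := by
    have hnd : l.Nodup := (List.nodup_cons.1 hfan.2.1).2
    rw [hlst, List.nodup_middle, List.nodup_cons, List.mem_append] at hnd
    exact ⟨fun h => hnd.1 (Or.inl h), fun h => hnd.1 (Or.inr h)⟩
  by_cases hpredcase : Reach x pred
  · -- CASE B : swap the component of `yk`
    have hykmem : yk ∈ y₀ :: l := List.getLast_mem _
    have hpredmem' : pred ∈ y₀ :: s := List.getLast_mem _
    have hxpred : x ≠ pred := fun h =>
      hfan.2.2.2 (by rw [hfull]; exact List.mem_append.2 (Or.inl (h ▸ hpredmem')))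
    have hxyk : x ≠ yk := fun h => hfan.2.2.2 (h ▸ hykmem)
    have hykzt : yk ∈ z :: t := by
      have h3 : (y₀ :: l).getLast? = some yk :=
        List.getLast?_eq_getLast_of_ne_nil _
      rw [hfull] at h3
      rw [List.getLast?_append_cons, List.getLast?_eq_getLast_of_ne_nil
        (List.cons_ne_nil _ _), Option.some_inj] at h3
      rw [← h3]
      exact List.getLast_mem _
    have hpredyk : pred ≠ yk := by
      intro h
      have hnodupfull := hfan.2.1
      rw [hfull, List.nodup_append] at hnodupfull
      exact hnodupfull.2.2 pred hpredmem' yk hykzt h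
    have hnoyk : ¬ Reach x yk := by
      intro hykR
      set G₂ : SimpleGraph W :=
        { Adj := fun u v => R u v ∧ Reach x u ∧ u ≠ v
          symm := ⟨by
            rintro u v ⟨h1, h2, h3⟩
            exact ⟨hRsymm u v h1, Relation.ReflTransGen.tail h2 h1, h3.symm⟩⟩
          loopless := ⟨fun u h => h.2.2 rfl⟩ } with hG₂
      haveI : DecidableRel G₂.Adj := Classical.decRel _
      have hnb : ∀ u v, G₂.Adj u v → (c u v = some α ∨ c u v = some β) := fun u v h => h.1
      have hdeg2 : ∀ u, G₂.degree u ≤ 2 := by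
        intro u
        rw [← card_neighborFinset_eq_degree]
        have hle : (G₂.neighborFinset u).card ≤ (Finset.univ : Finset Bool).card := by
          apply Finset.card_le_card_of_injOn (fun v => decide (c u v = some α))
          · intro v _; exact Finset.mem_univ _
          · intro v hv v' hv' heq
            rw [Finset.mem_coe, mem_neighborFinset] at hv hv'
            rcases hnb u v hv with h1 | h1 <;> rcases hnb u v' hv' with h2 | h2
            · exact hP.unique h1 h2
            · exfalso
              have hba : (β : Fin n) = α := by simpa [h1, h2] using heq
              exact hαβ hba.symm
            · exfalso
              have hba : (β : Fin n) = α := by simpa [h1, h2] using heq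
              exact hαβ hba.symm
            · exact hP.unique h1 h2
        simpa using hle
      have hdeg1 : ∀ u, Miss c u α ∨ Miss c u β → G₂.degree u ≤ 1 := by
        intro u hm
        rw [← card_neighborFinset_eq_degree, Finset.card_le_one]
        intro v hv v' hv'
        rw [mem_neighborFinset] at hv hv'
        rcases hm with hm | hm
        · rcases hnb u v hv with h1 | h1
          · exact absurd h1 (hm v)
          · rcases hnb u v' hv' with h2 | h2
            · exact absurd h2 (hm v')
            · exact hP.unique h1 h2
        · rcases hnb u v hv with h1 | h1
          · rcases hnb u v' hv' with h2 | h2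
            · exact hP.unique h1 h2
            · exact absurd h2 (hm v')
          · exact absurd h1 (hm v)
      have hreach2 : ∀ u, Reach x u → G₂.Reachable x u := by
        intro u h
        induction h with
        | refl => exact Reachable.refl x
        | @tail b cc hxb hbc ih =>
          have hne : b ≠ cc := by
            intro h'
            rw [h'] at hbc
            rcases hbc with h1 | h1 <;> rw [hP.2.1] at h1 <;> exact absurd h1 (by simp)
          exact ih.trans (SimpleGraph.Adj.reachable ⟨hbc, hxb, hne⟩)
      exact three_pendant G₂ hdeg2 hxpred hxyk hpredyk (hdeg1 x (Or.inl hα))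
        (hdeg1 pred (Or.inr hpredβ)) (hdeg1 yk (Or.inr hβ))
        (hreach2 pred hpredcase) (hreach2 yk hykR) (fun u v h => hreach2 u h.2.1)
    set S : Set W := {u | Reach yk u} with hSdef
    have hcl := hclosed yk
    have hxS : x ∉ S := fun h => hnoyk (hReachSymm _ _ h)
    have hpredS : pred ∉ S := fun h =>
      hnoyk (Relation.ReflTransGen.trans hpredcase (hReachSymm _ _ h))
    set c' := swapC c α β S with hc'
    have hP' := swapC_propC hP hcl
    have hSup' := swapC_supp hS hP.1 hcl
    have hchain' : List.Chain' (FanRel c' x) (y₀ :: l) := by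
      rw [hfull]; simp only [List.Chain', List.isChain_append]
      refine ⟨htransfer S hcl hxS _ hzs.1 ch1, htransfer S hcl hxS _ hzs.2 ch2, ?_⟩
      intro a ha b hb
      rw [List.getLast?_eq_getLast_of_ne_nil (List.cons_ne_nil _ _), Option.mem_def,
        Option.some_inj] at ha
      rw [List.head?_cons, Option.mem_def, Option.some_inj] at hb
      rw [← ha, ← hb]
      refine ⟨β, ?_, swapC_miss_out hP hcl hpredS hpredβ⟩
      rw [hc', swapC_eq_out hP hcl hxS]
      exact hz
    have hfan' : IsFan G c' x (y₀ :: l) := ⟨hchain', hfan.2.1, hfan.2.2.1, hfan.2.2.2⟩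
    have hnone' : c' x y₀ = none := by
      rw [hc', swapC_eq_out hP hcl hxS]; exact hnone
    have hmx' : Miss c' x α := swapC_miss_out hP hcl hxS hα
    have hml' : Miss c' yk α := swapC_miss_in hP hcl hαβ Relation.ReflTransGen.refl hβ
    obtain ⟨c'', hP'', hS2, hmono, hsome⟩ := rotate l c' y₀ α hP' hSup' hfan' hnone' hmx' hml'
    refine ⟨c'', hP'', hS2, fun u v h => hmono u v ?_, hsome⟩
    rw [hc', swapC_isSome hP.1 hcl]
    exact h
  · -- CASE A : swap the component of `pred`, rotate the truncated fan
    set S : Set W := {u | Reach pred u} with hSdef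
    have hcl := hclosed pred
    have hxS : x ∉ S := fun h => hpredcase (hReachSymm _ _ h)
    set c' := swapC c α β S with hc'
    have hP' := swapC_propC hP hcl
    have hSup' := swapC_supp hS hP.1 hcl
    have hnodupfull := hfan.2.1
    rw [hfull] at hnodupfull
    have hfan' : IsFan G c' x (y₀ :: s) := by
      refine ⟨htransfer S hcl hxS _ hzs.1 ch1, ?_, ?_, ?_⟩
      · exact List.Nodup.sublist (List.sublist_append_left _ _) hnodupfull
      · intro y hy
        refine hfan.2.2.1 y ?_
        rw [hfull, List.mem_append]
        exact Or.inl hy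
      · intro h
        exact hfan.2.2.2 (by rw [hfull, List.mem_append]; exact Or.inl h)
    have hnone' : c' x y₀ = none := by
      rw [hc', swapC_eq_out hP hcl hxS]; exact hnone
    have hmx' : Miss c' x α := swapC_miss_out hP hcl hxS hα
    have hml' : Miss c' pred α := swapC_miss_in hP hcl hαβ Relation.ReflTransGen.refl hpredβ
    obtain ⟨c'', hP'', hS2, hmono, hsome⟩ := rotate s c' y₀ α hP' hSup' hfan' hnone' hmx' hml'
    refine ⟨c'', hP'', hS2, fun u v h => hmono u v ?_, hsome⟩
    rw [hc', swapC_isSome hP.1 hcl]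
    exact h

end Extend

section Fill
variable {W : Type*} {n : ℕ} [Fintype W] [DecidableEq W]

lemma fill {G : SimpleGraph W} [DecidableRel G.Adj] (hd : ∀ w, G.degree w < n) :
    ∀ (N : ℕ) (c : W → W → Option (Fin n)), PropC c → Supp G c →
      (Finset.univ.filter (fun p : W × W => G.Adj p.1 p.2 ∧ c p.1 p.2 = none)).card ≤ N →
      ∃ c' : W → W → Option (Fin n), PropC c' ∧ Supp G c' ∧
        ∀ u v, G.Adj u v → (c' u v).isSome := by
  intro N
  induction N with
  | zero =>
    intro c hP hS hcard
    refine ⟨c, hP, hS, fun u v hadj => ?_⟩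
    rw [Nat.le_zero, Finset.card_eq_zero] at hcard
    by_contra hnone
    rw [Option.not_isSome_iff_eq_none] at hnone
    have hmem : (u, v) ∈ Finset.univ.filter
        (fun p : W × W => G.Adj p.1 p.2 ∧ c p.1 p.2 = none) := by
      rw [Finset.mem_filter]
      exact ⟨Finset.mem_univ _, hadj, hnone⟩
    rw [hcard] at hmem
    exact absurd hmem (Finset.notMem_empty _)
  | succ N ih =>
    intro c hP hS hcard
    by_cases hfull : ∀ u v, G.Adj u v → (c u v).isSome
    · exact ⟨c, hP, hS, hfull⟩
    · push_neg at hfull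
      obtain ⟨x, y₀, hadj, hnone0⟩ := hfull
      have hnone : c x y₀ = none := by
        rw [← Option.not_isSome_iff_eq_none]
        simpa using hnone0
      obtain ⟨c', hP', hS', hmono, hsome⟩ := extend hd hP hS hadj hnone
      apply ih c' hP' hS'
      have hsubset : (Finset.univ.filter (fun p : W × W => G.Adj p.1 p.2 ∧ c' p.1 p.2 = none)) ⊆
          (Finset.univ.filter (fun p : W × W => G.Adj p.1 p.2 ∧ c p.1 p.2 = none)) := by
        intro p hp
        rw [Finset.mem_filter] at hp ⊢
        refine ⟨hp.1, hp.2.1, ?_⟩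
        by_contra hne
        have h1 : (c p.1 p.2).isSome := Option.ne_none_iff_isSome.1 hne
        have h2 := hmono p.1 p.2 h1
        rw [hp.2.2] at h2
        simp at h2
      have hssub : (Finset.univ.filter (fun p : W × W => G.Adj p.1 p.2 ∧ c' p.1 p.2 = none)) ⊂
          (Finset.univ.filter (fun p : W × W => G.Adj p.1 p.2 ∧ c p.1 p.2 = none)) := by
        rw [Finset.ssubset_iff_of_subset hsubset]
        refine ⟨(x, y₀), ?_, ?_⟩
        · rw [Finset.mem_filter]; exact ⟨Finset.mem_univ _, hadj, hnone⟩
        · rw [Finset.mem_filter]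
          rintro ⟨-, -, h⟩
          rw [h] at hsome
          simp at hsome
      have := Finset.card_lt_card hssub
      omega

end Fill

/-- Vizing-type theorem: a graph with all degrees `< n` has a proper
`n`-edge-coloring. -/
theorem vizing {W : Type*} [Fintype W] [DecidableEq W] (G : SimpleGraph W) (n : ℕ)
    (hd : ∀ w, (G.neighborSet w).ncard < n) :
    ∃ C : Sym2 W → Fin n, ∀ e₁ ∈ G.edgeSet, ∀ e₂ ∈ G.edgeSet, e₁ ≠ e₂ →
      (∃ v, v ∈ e₁ ∧ v ∈ e₂) → C e₁ ≠ C e₂ := by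
  classical
  haveI : DecidableRel G.Adj := Classical.decRel _
  have hd' : ∀ w, G.degree w < n := by
    intro w
    have hcard : (G.neighborSet w).ncard = G.degree w := by
      rw [← card_neighborFinset_eq_degree, neighborFinset_def]
      exact Set.ncard_eq_toFinset_card' _
    rw [← hcard]
    exact hd w
  by_cases hW : IsEmpty W
  · refine ⟨Sym2.lift ⟨fun u _ => isEmptyElim u, fun u v => isEmptyElim u⟩, ?_⟩
    intro e₁ he₁
    induction e₁ with
    | _ a b => exact isEmptyElim a
  · rw [not_isEmpty_iff] at hW
    have hn : 0 < n := lt_of_le_of_lt (Nat.zero_le _) (hd' (Classical.arbitrary W))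
    have hP0 : PropC (n := n) (fun (_ _ : W) => (none : Option (Fin n))) :=
      ⟨fun _ _ => rfl, fun _ => rfl, fun u v w h hs => by simp at hs⟩
    have hS0 : Supp G (fun (_ _ : W) => (none : Option (Fin n))) := fun u v h => by simp at h
    obtain ⟨c, hP, hS, hfull⟩ := fill hd' _ (fun (_ _ : W) => (none : Option (Fin n))) hP0 hS0 le_rfl
    refine ⟨Sym2.lift ⟨fun u v => (c u v).getD ⟨0, hn⟩, fun u v => by show (c u v).getD ⟨0, hn⟩ = (c v u).getD ⟨0, hn⟩; rw [hP.1]⟩, ?_⟩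
    intro e₁ he₁ e₂ he₂ hne ⟨v, hv₁, hv₂⟩
    obtain ⟨b₁, rfl⟩ := Sym2.mem_iff_exists.1 hv₁
    obtain ⟨b₂, rfl⟩ := Sym2.mem_iff_exists.1 hv₂
    rw [mem_edgeSet] at he₁ he₂
    obtain ⟨a₁, ha₁⟩ := Option.isSome_iff_exists.1 (hfull v b₁ he₁)
    obtain ⟨a₂, ha₂⟩ := Option.isSome_iff_exists.1 (hfull v b₂ he₂)
    simp only [Sym2.lift_mk, ha₁, ha₂, Option.getD_some]
    intro heq
    apply hne
    have hb : b₁ = b₂ := hP.2.2 (by rw [ha₁, ha₂, heq]) (by rw [ha₁]; rfl)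
    rw [hb]

end VizingAux

section TruncAux

open VizingAux

variable {W : Type*}

lemma deg_le_maxDeg [Finite W] (G : SimpleGraph W) (w : W) : deg G w ≤ maxDeg G :=
  le_csSup ((Set.finite_range _).bddAbove) ⟨w, rfl⟩

lemma exists_maxDeg [Finite W] [Nonempty W] (G : SimpleGraph W) :
    ∃ w, deg G w = maxDeg G :=
  Nat.sSup_mem (s := Set.range (deg G)) (Set.range_nonempty _) ((Set.finite_range _).bddAbove)

lemma proper_ge_deg (G : SimpleGraph W) {k : ℕ} (C : Sym2 W → Fin k)
    (hC : IsProperEdgeColoring G C) (w : W) : deg G w ≤ k := by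
  have hinj : Function.Injective (fun u : G.neighborSet w => C s(w, (u : W))) := by
    rintro ⟨u, hu⟩ ⟨u', hu'⟩ heq
    have hu1 : G.Adj w u := hu
    have hu2 : G.Adj w u' := hu'
    simp only [Subtype.mk.injEq]
    by_contra hne
    have hedne : s(w, u) ≠ s(w, u') := by
      rw [Ne, Sym2.eq_iff]
      rintro (⟨-, h⟩ | ⟨h1, h2⟩)
      · exact hne h
      · exact G.irrefl (h1 ▸ hu2)
    exact hC s(w, u) hu1 s(w, u') hu2 hedne ⟨w, Sym2.mem_mk_left _ _, Sym2.mem_mk_left _ _⟩ heq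
  calc deg G w = Nat.card (G.neighborSet w) := (Nat.card_coe_set_eq _).symm
  _ ≤ Nat.card (Fin k) := Nat.card_le_card_of_injective _ hinj
  _ = k := by simp

lemma exists_proper_big [Finite W] (G : SimpleGraph W) :
    ∃ k : ℕ, ∃ C : Sym2 W → Fin k, IsProperEdgeColoring G C := by
  haveI := Fintype.ofFinite W
  haveI : DecidableEq W := Classical.decEq W
  refine ⟨Fintype.card (Sym2 W), Fintype.equivFin (Sym2 W), ?_⟩
  intro e₁ _ e₂ _ hne _
  exact fun h => hne ((Fintype.equivFin (Sym2 W)).injective h)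

lemma chromIndex_spec [Finite W] (G : SimpleGraph W) :
    ∃ C : Sym2 W → Fin (chromIndex G), IsProperEdgeColoring G C := by
  obtain ⟨k, C, hC⟩ := exists_proper_big G
  have hne : {k : ℕ | ∃ C : Sym2 W → Fin k, IsProperEdgeColoring G C}.Nonempty := ⟨k, C, hC⟩
  exact Nat.sInf_mem hne

variable {V : Type*} (X : SimpleGraph V) (H : SimpleGraph X.Dart)

/-- The constituent at `v` as a graph on the ambient dart type. -/
def clusterGraph (v : V) : SimpleGraph X.Dart where
  Adj d d' := H.Adj d d' ∧ d.toProd.1 = v ∧ d'.toProd.1 = v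
  symm := ⟨by rintro d d' ⟨h1, h2, h3⟩; exact ⟨h1.symm, h3, h2⟩⟩
  loopless := ⟨fun d h => H.irrefl h.1⟩

lemma trunc_adj (d d' : X.Dart) :
    (trunc X H).Adj d d' ↔ d ≠ d' ∧ (d' = d.symm ∨ H.Adj d d') := by
  rw [trunc, SimpleGraph.fromRel_adj]
  constructor
  · rintro ⟨h1, (h | h) | (h | h)⟩
    · exact ⟨h1, Or.inl h⟩
    · exact ⟨h1, Or.inr h⟩
    · refine ⟨h1, Or.inl ?_⟩
      rw [h, SimpleGraph.Dart.symm_symm]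
    · exact ⟨h1, Or.inr h.symm⟩
  · rintro ⟨h1, h⟩
    exact ⟨h1, Or.inl h⟩

lemma trunc_nbhd (d : X.Dart) :
    (trunc X H).neighborSet d = insert d.symm (H.neighborSet d) := by
  ext d'
  rw [SimpleGraph.mem_neighborSet, trunc_adj]
  constructor
  · rintro ⟨h1, h | h⟩
    · exact Set.mem_insert_iff.2 (Or.inl h)
    · exact Set.mem_insert_iff.2 (Or.inr h)
  · intro h
    rcases Set.mem_insert_iff.1 h with h | h
    · exact ⟨fun he => SimpleGraph.Dart.symm_ne d (he.trans h).symm, Or.inl h⟩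
    · exact ⟨h.ne, Or.inr h⟩

lemma deg_trunc (hH : RespectsClusters X H) [Finite X.Dart] (d : X.Dart) :
    deg (trunc X H) d = deg H d + 1 := by
  rw [deg, trunc_nbhd, Set.ncard_insert_of_notMem ?_ (Set.toFinite _), deg]
  intro hmem
  have h2 := hH d d.symm hmem
  simp only [SimpleGraph.Dart.symm_toProd, Prod.fst_swap] at h2
  exact SimpleGraph.Dart.fst_ne_snd d h2

lemma clusterGraph_nbhd_mem (hH : RespectsClusters X H) {v : V} {d : X.Dart}
    (hd : d.toProd.1 = v) : (clusterGraph X H v).neighborSet d = H.neighborSet d := by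
  ext d'
  constructor
  · intro h; exact h.1
  · intro h
    exact ⟨h, hd, by rw [← hH d d' h]; exact hd⟩

lemma clusterGraph_nbhd_nmem {v : V} {d : X.Dart} (hd : d.toProd.1 ≠ v) :
    (clusterGraph X H v).neighborSet d = ∅ := by
  ext d'
  constructor
  · intro h; exact absurd h.2.1 hd
  · intro h; exact absurd h (Set.notMem_empty _)

lemma deg_constituent (hH : RespectsClusters X H) (v : V) (d : cluster X v) :
    deg (constituent X H v) d = deg H d.1 := by
  rw [deg, deg, ← Set.ncard_image_of_injective _ (Subtype.val_injective
    (p := fun x => x ∈ cluster X v))]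
  congr 1
  ext d'
  simp only [Set.mem_image, SimpleGraph.mem_neighborSet]
  constructor
  · rintro ⟨a, ha, rfl⟩
    exact ha
  · intro h
    have hmem : d' ∈ cluster X v := by
      have h2 := hH d.1 d' h
      exact Set.mem_setOf.2 (by rw [← h2]; exact d.2)
    exact ⟨⟨d', hmem⟩, h, rfl⟩

lemma lift_coloring (v : V) {m : ℕ} (hm : 0 < m) (C₀ : Sym2 (cluster X v) → Fin m)
    (hC₀ : IsProperEdgeColoring (constituent X H v) C₀) :
    ∃ E : Sym2 X.Dart → Fin m, IsProperEdgeColoring (clusterGraph X H v) E := by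
  classical
  set φ : Sym2 (cluster X v) → Sym2 X.Dart := Sym2.map Subtype.val with hφ
  have hφinj : Function.Injective φ := Sym2.map.injective Subtype.val_injective
  refine ⟨fun e => if h : ∃ p, φ p = e then C₀ h.choose else ⟨0, hm⟩, ?_⟩
  have hval : ∀ p : Sym2 (cluster X v),
      (if h : ∃ p', φ p' = φ p then C₀ h.choose else ⟨0, hm⟩) = C₀ p := by
    intro p
    rw [dif_pos ⟨p, rfl⟩]
    congr 1
    exact hφinj (Exists.choose_spec (⟨p, rfl⟩ : ∃ p', φ p' = φ p))
  have hrep : ∀ e ∈ (clusterGraph X H v).edgeSet,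
      ∃ p, φ p = e ∧ p ∈ (constituent X H v).edgeSet := by
    intro e he
    induction e using Sym2.ind with
    | _ a b =>
      rw [SimpleGraph.mem_edgeSet] at he
      obtain ⟨h1, h2, h3⟩ := he
      refine ⟨s(⟨a, h2⟩, ⟨b, h3⟩), rfl, ?_⟩
      rw [SimpleGraph.mem_edgeSet]
      exact h1
  rintro e₁ he₁ e₂ he₂ hne ⟨u, hu₁, hu₂⟩
  obtain ⟨p₁, hp₁, hp₁e⟩ := hrep e₁ he₁
  obtain ⟨p₂, hp₂, hp₂e⟩ := hrep e₂ he₂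
  simp only []
  rw [← hp₁, ← hp₂, hval p₁, hval p₂]
  have hucl : u ∈ cluster X v := by
    rw [← hp₁, hφ] at hu₁
    obtain ⟨a, ha, haeq⟩ := Sym2.mem_map.1 hu₁
    exact haeq ▸ a.2
  apply hC₀ p₁ hp₁e p₂ hp₂e (fun h => hne (by rw [← hp₁, ← hp₂, h]))
  refine ⟨⟨u, hucl⟩, ?_, ?_⟩
  · rw [← hp₁, hφ] at hu₁
    obtain ⟨a, ha, haeq⟩ := Sym2.mem_map.1 hu₁
    have haa : a = ⟨u, hucl⟩ := Subtype.ext haeq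
    rw [← haa]; exact ha
  · rw [← hp₂, hφ] at hu₂
    obtain ⟨a, ha, haeq⟩ := Sym2.mem_map.1 hu₂
    have haa : a = ⟨u, hucl⟩ := Subtype.ext haeq
    rw [← haa]; exact ha

end TruncAux

/-- if every constituent containing a vertex of maximum degree of the
truncation is class I, then the truncation is class I. -/
theorem stmt14 {V : Type*} [Fintype V] (X : SimpleGraph V) (hX : NoIsolated X)
    (H : SimpleGraph X.Dart) (hH : RespectsClusters X H)
    (hcon : ∀ v : V,
      (∃ d : X.Dart, d.toProd.1 = v ∧ deg (trunc X H) d = maxDeg (trunc X H)) →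
      ClassI (constituent X H v)) :
    ClassI (trunc X H) := by
  classical
  haveI hfinD : Finite X.Dart :=
    Finite.of_injective _ (SimpleGraph.Dart.toProd_injective (G := X))
  by_cases hDe : IsEmpty X.Dart
  · -- no darts at all
    haveI : IsEmpty (Sym2 X.Dart) := by
      constructor
      intro e
      induction e using Sym2.ind with
      | _ a b => exact isEmptyElim a
    have hC : (0 : ℕ) ∈ {k : ℕ | ∃ C : Sym2 X.Dart → Fin k,
        IsProperEdgeColoring (trunc X H) C} :=
      ⟨fun e => isEmptyElim e, fun e₁ he₁ => isEmptyElim e₁⟩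
    have h1 : chromIndex (trunc X H) = 0 := Nat.le_zero.1 (Nat.sInf_le hC)
    have h2 : maxDeg (trunc X H) = 0 := by
      rw [maxDeg, Set.range_eq_empty (deg (trunc X H)), csSup_empty]
      rfl
    rw [ClassI, h1, h2]
  · rw [not_isEmpty_iff] at hDe
    obtain ⟨d₀, hd₀⟩ := exists_maxDeg (trunc X H)
    set Δ := maxDeg (trunc X H) with hΔdef
    have hdegT : ∀ d, deg (trunc X H) d = deg H d + 1 := deg_trunc X H hH
    have hΔ1 : 1 ≤ Δ := by rw [← hd₀, hdegT]; omega
    have hdle : ∀ d, deg (trunc X H) d ≤ Δ := deg_le_maxDeg (trunc X H)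
    have hup : ∃ C : Sym2 X.Dart → Fin Δ, IsProperEdgeColoring (trunc X H) C := by
      rcases Nat.lt_or_ge 1 Δ with hΔ2 | hΔ2'
      swap
      · -- Δ = 1 : constant coloring works
        refine ⟨fun _ => ⟨0, hΔ1⟩, ?_⟩
        rintro e₁ he₁ e₂ he₂ hne ⟨u, hu₁, hu₂⟩
        exfalso
        obtain ⟨b₁, rfl⟩ := Sym2.mem_iff_exists.1 hu₁
        obtain ⟨b₂, rfl⟩ := Sym2.mem_iff_exists.1 hu₂
        have hb : b₁ ≠ b₂ := fun h => hne (by rw [h])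
        rw [SimpleGraph.mem_edgeSet] at he₁ he₂
        have hsub : {b₁, b₂} ⊆ (trunc X H).neighborSet u := by
          intro a ha
          rcases Set.mem_insert_iff.1 ha with rfl | ha
          · exact he₁
          · rw [Set.mem_singleton_iff] at ha
            exact ha ▸ he₂
        have h2 : 2 ≤ deg (trunc X H) u := by
          rw [deg]
          calc 2 = ({b₁, b₂} : Set X.Dart).ncard := by
                rw [Set.ncard_insert_of_notMem (by simpa using hb) (Set.toFinite _),
                  Set.ncard_singleton]
          _ ≤ _ := Set.ncard_le_ncard hsub (Set.toFinite _)
        have := hdle u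
        omega
      -- Δ ≥ 2
      have key : ∀ v : V, ∃ E : Sym2 X.Dart → Fin (Δ - 1),
          IsProperEdgeColoring (clusterGraph X H v) E := by
        intro v
        by_cases hA : ∃ d : X.Dart, d.toProd.1 = v ∧ deg (trunc X H) d = maxDeg (trunc X H)
        · have hconv := hcon v hA
          obtain ⟨dstar, hdv, hdd⟩ := hA
          haveI : Nonempty (cluster X v) := ⟨⟨dstar, hdv⟩⟩
          have hmc : maxDeg (constituent X H v) = Δ - 1 := by
            apply le_antisymm
            · apply csSup_le (Set.range_nonempty _)
              rintro k ⟨d, rfl⟩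
              rw [deg_constituent X H hH]
              have h3 := hdle d.1
              rw [hdegT] at h3
              omega
            · apply le_csSup ((Set.finite_range _).bddAbove)
              refine ⟨⟨dstar, hdv⟩, ?_⟩
              rw [deg_constituent X H hH]
              show deg H dstar = Δ - 1
              have h3 := hdd
              rw [hdegT] at h3
              omega
          have hchrom : chromIndex (constituent X H v) = Δ - 1 := by
            rw [ClassI] at hconv
            rw [hconv, hmc]
          obtain ⟨C₀, hC₀⟩ : ∃ C₀ : Sym2 (cluster X v) → Fin (Δ - 1),
              IsProperEdgeColoring (constituent X H v) C₀ := by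
            have hmem := chromIndex_spec (constituent X H v)
            rw [hchrom] at hmem
            exact hmem
          exact lift_coloring X H v (by omega) C₀ hC₀
        · push_neg at hA
          have hdeg : ∀ d : X.Dart, ((clusterGraph X H v).neighborSet d).ncard < Δ - 1 := by
            intro d
            by_cases hd : d.toProd.1 = v
            · rw [clusterGraph_nbhd_mem X H hH hd]
              have h1 := hA d hd
              have h2 := hdle d
              rw [hdegT] at h1 h2
              have : deg H d = (H.neighborSet d).ncard := rfl
              omega
            · rw [clusterGraph_nbhd_nmem X H hd, Set.ncard_empty]
              omega
          haveI : Fintype X.Dart := Fintype.ofFinite _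
          haveI : DecidableEq X.Dart := Classical.decEq _
          exact VizingAux.vizing (clusterGraph X H v) (Δ - 1) hdeg
      choose Ecol hEcol using key
      haveI : Nonempty V := ⟨(Classical.arbitrary X.Dart).toProd.1⟩
      set vdef : V := Classical.arbitrary V with hvdef
      set pickV : Sym2 X.Dart → V := Sym2.lift ⟨fun d d' =>
        if d.toProd.1 = d'.toProd.1 then d.toProd.1 else vdef, by
          intro d d'
          dsimp only
          by_cases h : d.toProd.1 = d'.toProd.1
          · rw [if_pos h, if_pos h.symm, h]
          · rw [if_neg h, if_neg (fun hh => h hh.symm)]⟩ with hpickdef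
      have hpickV : ∀ d d' : X.Dart, d.toProd.1 = d'.toProd.1 →
          pickV s(d, d') = d.toProd.1 := by
        intro d d' h
        rw [hpickdef, Sym2.lift_mk]
        exact if_pos h
      set C : Sym2 X.Dart → Fin Δ := fun e =>
        if h : ∃ d : X.Dart, e = s(d, d.symm) then ⟨Δ - 1, by omega⟩
        else Fin.castLE (by omega) (Ecol (pickV e) e) with hCdef
      refine ⟨C, ?_⟩
      have hclass : ∀ e ∈ (trunc X H).edgeSet, ∀ u, u ∈ e →
          (¬ ∃ d : X.Dart, e = s(d, d.symm)) → ∃ b, e = s(u, b) ∧ H.Adj u b := by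
        intro e he u hu hnm
        obtain ⟨b, rfl⟩ := Sym2.mem_iff_exists.1 hu
        rw [SimpleGraph.mem_edgeSet, trunc_adj] at he
        rcases he.2 with h | h
        · exact absurd ⟨u, by rw [h]⟩ hnm
        · exact ⟨b, rfl, h⟩
      rintro e₁ he₁ e₂ he₂ hne ⟨u, hu₁, hu₂⟩
      have hmatchuniq : ∀ w : X.Dart, ∀ x : X.Dart, x ∈ s(w, w.symm) →
          s(w, w.symm) = s(x, x.symm) := by
        intro w x hx
        rcases Sym2.mem_iff.1 hx with rfl | rfl
        · rfl
        · rw [SimpleGraph.Dart.symm_symm]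
          exact Sym2.eq_swap.symm
      by_cases h₁ : ∃ d : X.Dart, e₁ = s(d, d.symm) <;>
        by_cases h₂ : ∃ d : X.Dart, e₂ = s(d, d.symm)
      · exfalso
        obtain ⟨a, rfl⟩ := h₁
        obtain ⟨b, rfl⟩ := h₂
        exact hne ((hmatchuniq a u hu₁).trans (hmatchuniq b u hu₂).symm)
      · rw [hCdef]
        simp only [dif_pos h₁, dif_neg h₂]
        intro heq
        have hval := congrArg Fin.val heq
        rw [Fin.coe_castLE] at hval
        have hval2 : Δ - 1 = (Ecol (pickV e₂) e₂).val := hval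
        have hv2 := (Ecol (pickV e₂) e₂).isLt
        omega
      · rw [hCdef]
        simp only [dif_pos h₂, dif_neg h₁]
        intro heq
        have hval := congrArg Fin.val heq
        rw [Fin.coe_castLE] at hval
        have hval2 : (Ecol (pickV e₁) e₁).val = Δ - 1 := hval
        have hv2 := (Ecol (pickV e₁) e₁).isLt
        omega
      · obtain ⟨b₁, he₁', hH₁⟩ := hclass e₁ he₁ u hu₁ h₁
        obtain ⟨b₂, he₂', hH₂⟩ := hclass e₂ he₂ u hu₂ h₂
        have hb₁ : b₁.toProd.1 = u.toProd.1 := (hH u b₁ hH₁).symm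
        have hb₂ : b₂.toProd.1 = u.toProd.1 := (hH u b₂ hH₂).symm
        have hp₁ : pickV e₁ = u.toProd.1 := by
          rw [he₁']
          exact hpickV u b₁ hb₁.symm
        have hp₂ : pickV e₂ = u.toProd.1 := by
          rw [he₂']
          exact hpickV u b₂ hb₂.symm
        rw [hCdef]
        simp only [dif_neg h₁, dif_neg h₂, hp₁, hp₂]
        intro heq
        have heq2 : Ecol u.toProd.1 e₁ = Ecol u.toProd.1 e₂ := by
          rw [Fin.ext_iff] at heq ⊢
          rw [Fin.coe_castLE, Fin.coe_castLE] at heq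
          exact heq
        have hm₁ : e₁ ∈ (clusterGraph X H u.toProd.1).edgeSet := by
          rw [he₁', SimpleGraph.mem_edgeSet]
          exact ⟨hH₁, rfl, hb₁⟩
        have hm₂ : e₂ ∈ (clusterGraph X H u.toProd.1).edgeSet := by
          rw [he₂', SimpleGraph.mem_edgeSet]
          exact ⟨hH₂, rfl, hb₂⟩
        exact hEcol u.toProd.1 e₁ hm₁ e₂ hm₂ hne ⟨u, hu₁, hu₂⟩ heq2
    have hlow : ∀ m : ℕ, ∀ C : Sym2 X.Dart → Fin m,
        IsProperEdgeColoring (trunc X H) C → Δ ≤ m := by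
      intro m C hC
      rw [← hd₀]
      exact proper_ge_deg (trunc X H) C hC d₀
    rw [ClassI]
    apply le_antisymm
    · exact Nat.sInf_le hup
    · apply le_csInf ⟨Δ, hup⟩
      rintro m ⟨C, hC⟩
      exact hlow m C hC
end
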